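/- arXiv:1903.00560 — 5 statements merged into one kernel-verified Lean document; each statement's English description precedes it below -/
import Mathlib

section
/- Let R be a discrete valuation ring with maximal ideal generated by π and fraction field F, let B be a quaternion algebra over F, and let O ⊆ B be an R-order. Then O contains a quadratic R-subalgebra S that is integrally closed in FS if and only if there exists α ∈ O such that for all r ∈ R, either π ∤ trd(α − r) or π² ∤ nrd(α − r), where trd and nrd denote the reduced trace and reduced norm. -/
set_option linter.unusedSectionVars false


/-- `O` is an `R`-order in the quaternion algebra `B`: a subring that is a full `R`-lattice. -/
def IsQuaternionOrder (R F B : Type*) [CommRing R] [Field F] [Algebra R F]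
    [Ring B] [Algebra F B] [Algebra R B] [IsScalarTower R F B]
    (O : Subalgebra R B) : Prop :=
  Module.Finite R O ∧ Submodule.span F (O : Set B) = ⊤

/-- `O` is basic: it contains a commutative quadratic `R`-subalgebra `S` (free of rank `2`
as an `R`-module) that is integrally closed in its total quotient ring `F·S`. -/
def IsBasicOrder (R F B : Type*) [CommRing R] [Field F] [Algebra R F]
    [Ring B] [Algebra F B] [Algebra R B] [IsScalarTower R F B]
    (O : Subalgebra R B) : Prop :=
  ∃ S : Subalgebra R B, S ≤ O ∧ (∀ x ∈ S, ∀ y ∈ S, x * y = y * x) ∧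
    Module.Free R S ∧ Module.finrank R S = 2 ∧
    ∀ β ∈ Submodule.span F (S : Set B), IsIntegral R β → β ∈ S


namespace StmtAux
variable {R F B : Type*} [CommRing R] [IsDomain R] [IsDiscreteValuationRing R]
    [Field F] [Algebra R F] [IsFractionRing R F]
    [Ring B] [Nontrivial B] [Algebra F B] [Algebra R B] [IsScalarTower R F B]

lemma jinj : Function.Injective (algebraMap F B) := RingHom.injective _

lemma indep_pair {α : B} (hα : ∀ c : F, α ≠ algebraMap F B c)
    {c d : F} (h : c • (1 : B) + d • α = 0) : c = 0 ∧ d = 0 := by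
  rcases eq_or_ne d 0 with hd | hd
  · subst hd
    rw [zero_smul, add_zero, ← Algebra.algebraMap_eq_smul_one] at h
    have hc : c = 0 := by
      apply jinj (F := F) (B := B); simpa using h
    exact ⟨hc, rfl⟩
  · exfalso
    apply hα (-(d⁻¹ * c))
    have hda : d • α = -(c • (1:B)) := by
      rw [eq_neg_iff_add_eq_zero, add_comm]; exact h
    have : α = (-(d⁻¹ * c)) • (1:B) := by
      calc α = d⁻¹ • (d • α) := by rw [smul_smul, inv_mul_cancel₀ hd, one_smul]
      _ = (-(d⁻¹ * c)) • (1:B) := by rw [hda, smul_neg, smul_smul, ← neg_smul]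
    rw [this, Algebra.algebraMap_eq_smul_one]

/-- `F`-linear independence consequence as an equality-of-coefficients statement. -/
lemma coeff_eq {α : B} (hα : ∀ c : F, α ≠ algebraMap F B c)
    {c d c' d' : F} (h : c • (1 : B) + d • α = c' • (1 : B) + d' • α) :
    c = c' ∧ d = d' := by
  have h0 : (c - c') • (1 : B) + (d - d') • α = 0 := by
    rw [sub_smul, sub_smul]; rw [← sub_eq_zero] at h; rw [← h]; abel
  obtain ⟨h1, h2⟩ := indep_pair hα h0
  constructor <;> [skip; skip] <;> rw [← sub_eq_zero] <;> assumption

end StmtAux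

namespace Part2
variable {R F B : Type*} [CommRing R] [IsDomain R] [IsDiscreteValuationRing R]
    [Field F] [Algebra R F] [IsFractionRing R F]
    [Ring B] [Nontrivial B] [Algebra F B] [Algebra R B] [IsScalarTower R F B]
variable (trd : B →ₗ[F] F) (nrd : B → F)
    (hchar : ∀ α : B, α ^ 2 - algebraMap F B (trd α) * α + algebraMap F B (nrd α) = 0)
    (htrd1 : trd 1 = 2)

open StmtAux

lemma smul_one_inj {c d : F} (h : c • (1:B) = d • (1:B)) : c = d :=
  jinj (B := B) (by rw [Algebra.algebraMap_eq_smul_one, Algebra.algebraMap_eq_smul_one]; exact h)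

include htrd1 in
lemma trd_comb (c d : F) (α : B) : trd (c • (1:B) + d • α) = 2 * c + d * trd α := by
  rw [map_add, map_smul, map_smul, htrd1, smul_eq_mul, smul_eq_mul]; ring

lemma sq_comb (c d : F) (α : B) :
    (c • (1:B) + d • α)^2 = (c*c) • (1:B) + (2*(c*d)) • α + (d*d) • (α*α) := by
  simp only [pow_two, add_mul, mul_add, smul_mul_smul_comm, one_mul, mul_one]
  module

include hchar in
lemma mul_self_eq (α : B) : α * α = (trd α) • α - (nrd α) • (1:B) := by
  have h := hchar α
  rw [pow_two, sub_add_eq_add_sub, sub_eq_zero] at h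
  rw [eq_sub_iff_add_eq, Algebra.smul_def (trd α), Algebra.smul_def (nrd α), mul_one]
  exact h

include hchar htrd1 in
lemma nrd_comb (c d : F) (α : B) :
    nrd (c • (1:B) + d • α) = c^2 + c*d*(trd α) + d^2*(nrd α) := by
  apply smul_one_inj (B := B)
  have hjn : (nrd (c • (1:B) + d • α)) • (1:B) =
      (trd (c • (1:B) + d • α)) • (c • (1:B) + d • α) - (c • (1:B) + d • α)^2 := by
    have h := hchar (c • (1:B) + d • α)
    rw [pow_two, sub_add_eq_add_sub, sub_eq_zero] at h
    rw [eq_sub_iff_add_eq, pow_two, Algebra.smul_def (trd _), Algebra.smul_def (nrd _),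
      mul_one, add_comm]
    exact h
  rw [hjn, trd_comb trd htrd1, sq_comb, mul_self_eq trd nrd hchar]
  module

end Part2

namespace Part3
open StmtAux Part2 Polynomial
variable {R F B : Type*} [CommRing R] [IsDomain R] [IsDiscreteValuationRing R]
    [Field F] [Algebra R F] [IsFractionRing R F]
    [Ring B] [Nontrivial B] [Algebra F B] [Algebra R B] [IsScalarTower R F B]
variable (trd : B →ₗ[F] F) (nrd : B → F)
    (hchar : ∀ α : B, α ^ 2 - algebraMap F B (trd α) * α + algebraMap F B (nrd α) = 0)
    (htrd1 : trd 1 = 2)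

include hchar htrd1 in
lemma trd_nrd_scalar (c : F) :
    trd (algebraMap F B c) = 2 * c ∧ nrd (algebraMap F B c) = c^2 := by
  have h1 := trd_comb trd htrd1 c 0 (1:B)
  have h2 := nrd_comb trd nrd hchar htrd1 c 0 (1:B)
  rw [zero_smul, add_zero, ← Algebra.algebraMap_eq_smul_one] at h1 h2
  constructor
  · rw [h1]; ring
  · rw [h2]; ring

include hchar htrd1 in
lemma coeffs_mem (x : B) (hx : IsIntegral R x) :
    ∃ t n : R, trd x = algebraMap R F t ∧ nrd x = algebraMap R F n := by
  by_cases hc : ∃ c : F, x = algebraMap F B c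
  · obtain ⟨c, rfl⟩ := hc
    have hcint : IsIntegral R c := (isIntegral_algebraMap_iff (jinj (F := F) (B := B))).mp hx
    obtain ⟨r, rfl⟩ := IsIntegrallyClosed.isIntegral_iff.mp hcint
    obtain ⟨h1, h2⟩ := trd_nrd_scalar trd nrd hchar htrd1 (algebraMap R F r)
    exact ⟨2*r, r^2, by rw [h1, map_mul, map_ofNat], by rw [h2, map_pow]⟩
  · push_neg at hc
    obtain ⟨p, pmonic, peval⟩ := hx
    set Q : F[X] := X^2 + (C (-(trd x)) * X + C (nrd x)) with hQ
    have hQmonic : Q.Monic := by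
      apply (monic_X_pow 2).add_of_left
      apply lt_of_le_of_lt (degree_linear_le)
      rw [degree_X_pow]; norm_num
    have hQeval : aeval x Q = 0 := by
      have h := hchar x
      simp only [hQ, map_add, map_mul, map_pow, aeval_X, aeval_C, map_neg]
      rw [neg_mul, ← add_assoc, ← sub_eq_add_neg]
      exact h
    have hdvd : Q ∣ p.map (algebraMap R F) := by
      rw [← Polynomial.modByMonic_eq_zero_iff_dvd hQmonic]
      set r0 := p.map (algebraMap R F) %ₘ Q with hr0
      have hev : aeval x r0 = 0 := by
        have hdiv := Polynomial.modByMonic_add_div (p.map (algebraMap R F)) Q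
        have hmp : aeval x (p.map (algebraMap R F)) = 0 := by
          rw [aeval_map_algebraMap]; exact peval
        have := congrArg (aeval x) hdiv
        rw [map_add, map_mul, hQeval, zero_mul, add_zero, hmp] at this
        exact this
      have hdegQ : Q.degree = 2 := by
        have h2 : degree (C (-(trd x)) * X + C (nrd x)) < degree ((X:F[X])^2) := by
          rw [degree_X_pow]; exact lt_of_le_of_lt degree_linear_le (by norm_num)
        rw [hQ, degree_add_eq_left_of_degree_lt h2, degree_X_pow]
        norm_num
      have hdeg1 : r0.degree ≤ 1 := by
        have := Polynomial.degree_modByMonic_lt (p.map (algebraMap R F)) hQmonic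
        rw [hdegQ] at this
        exact Order.lt_succ_iff.mp this
      have hform := Polynomial.eq_X_add_C_of_degree_le_one hdeg1
      have hev2 : (r0.coeff 0) • (1:B) + (r0.coeff 1) • x = 0 := by
        have := hev
        rw [hform] at this
        simp only [map_add, map_mul, aeval_X, aeval_C] at this
        rw [Algebra.smul_def, Algebra.smul_def, mul_one, add_comm]
        rw [← this]
      obtain ⟨h0, h1⟩ := indep_pair (fun c hc' => hc c hc') hev2
      rw [hform, h0, h1]; simp
    obtain ⟨q', hq'⟩ := IsIntegrallyClosed.eq_map_mul_C_of_dvd F pmonic hdvd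
    rw [hQmonic.leadingCoeff, map_one, mul_one] at hq'
    refine ⟨-(q'.coeff 1), q'.coeff 0, ?_, ?_⟩
    · have := congrArg (fun f => Polynomial.coeff f 1) hq'
      simp only [coeff_map, hQ, coeff_add, coeff_X_pow, coeff_C_mul, coeff_X, coeff_C] at this
      norm_num at this
      rw [map_neg, this, neg_neg]
    · have := congrArg (fun f => Polynomial.coeff f 0) hq'
      simp only [coeff_map, hQ, coeff_add, coeff_X_pow, coeff_C_mul, coeff_X, coeff_C] at this
      norm_num at this
      rw [this]

end Part3

namespace Part4
open StmtAux Part2 Part3 Polynomial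
variable {R F B : Type*} [CommRing R] [IsDomain R] [IsDiscreteValuationRing R]
    [Field F] [Algebra R F] [IsFractionRing R F]
    [Ring B] [Nontrivial B] [Algebra F B] [Algebra R B] [IsScalarTower R F B]
variable (trd : B →ₗ[F] F) (nrd : B → F)
    (hchar : ∀ α : B, α ^ 2 - algebraMap F B (trd α) * α + algebraMap F B (nrd α) = 0)
    (htrd1 : trd 1 = 2)

lemma iinj : Function.Injective (algebraMap R F) := IsFractionRing.injective R F

lemma kdef (r : R) : algebraMap R B r = (algebraMap R F r) • (1:B) := by
  rw [IsScalarTower.algebraMap_apply R F B, Algebra.algebraMap_eq_smul_one]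

lemma shift_repr (α : B) (r : R) :
    α - algebraMap R B r = (-(algebraMap R F r)) • (1:B) + (1:F) • α := by
  rw [kdef (F := F) r, one_smul, neg_smul, sub_eq_add_neg, add_comm]

/-- An element of `F` whose image in `B` is integral over `R` lies in `R`. -/
lemma scalar_integral {c : F} (h : IsIntegral R (algebraMap F B c)) :
    ∃ r : R, algebraMap R F r = c := by
  have : IsIntegral R c := (isIntegral_algebraMap_iff (jinj (F := F) (B := B))).mp h
  exact IsIntegrallyClosed.isIntegral_iff.mp this

include hchar in
/-- The core of the forward direction. -/
lemma forward_core (π : R) (hπ : Irreducible π) (S : Subalgebra R B)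
    (hic : ∀ β ∈ Submodule.span F (S : Set B), IsIntegral R β → β ∈ S)
    (α : B) (hαS : α ∈ S) (hα : ∀ c : F, α ≠ algebraMap F B c)
    (hmem : ∀ x ∈ S, ∃ u v : R, x = u • (1:B) + v • α) :
    ∀ r : R, (¬ ∃ s : R, trd (α - algebraMap R B r) = algebraMap R F (π * s)) ∨
        (¬ ∃ s : R, nrd (α - algebraMap R B r) = algebraMap R F (π ^ 2 * s)) := by
  intro r
  by_contra hcon
  push_neg at hcon
  obtain ⟨⟨s₁, hs₁⟩, ⟨s₂, hs₂⟩⟩ := hcon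
  have hπ0 : algebraMap R F π ≠ 0 :=
    fun h => hπ.ne_zero (iinj (R := R) (F := F) (by rw [h, map_zero]))
  set i : R →+* F := algebraMap R F with hi
  set γ : B := α - algebraMap R B r with hγ
  set β : B := (i π)⁻¹ • γ with hβ
  have hkr : algebraMap R B r = (i r) • (1:B) := kdef r
  have hc : γ^2 - algebraMap F B (i (π * s₁)) * γ + algebraMap F B (i (π^2 * s₂)) = 0 := by
    have := hchar γ; rwa [hs₁, hs₂] at this
  have key : β^2 - algebraMap R B s₁ * β + algebraMap R B s₂ = 0 := by
    have hsq : (i π)^2 ≠ 0 := pow_ne_zero _ hπ0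
    have T1 : ((i π)^2 : F) • β^2 = γ^2 := by
      rw [hβ, _root_.smul_pow, smul_smul, inv_pow, mul_inv_cancel₀ hsq, one_smul]
    have T2 : ((i π)^2 : F) • (algebraMap R B s₁ * β) = algebraMap F B (i (π * s₁)) * γ := by
      have e1 : ((i π)^2 : F) • (algebraMap R B s₁ * β) = ((i π)^2 * (i π)⁻¹ * i s₁) • γ := by
        rw [hβ, mul_smul_comm, smul_smul, IsScalarTower.algebraMap_apply R F B,
          ← Algebra.smul_def, smul_smul]
      have e2 : algebraMap F B (i (π * s₁)) * γ = (i π * i s₁) • γ := by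
        rw [← Algebra.smul_def, map_mul]
      rw [e1, e2]
      congr 1
      field_simp
    have T3 : ((i π)^2 : F) • (algebraMap R B s₂ : B) = algebraMap F B (i (π^2 * s₂)) := by
      rw [IsScalarTower.algebraMap_apply R F B, Algebra.smul_def, ← map_mul]
      congr 1
      rw [map_mul, map_pow]
    have h2 : ((i π)^2 : F) • (β^2 - algebraMap R B s₁ * β + algebraMap R B s₂) = 0 := by
      rw [smul_add, smul_sub, T1, T2, T3, hc]
    rcases smul_eq_zero.mp h2 with h | h
    · exact absurd h hsq
    · exact h
  have hint : IsIntegral R β := by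
    refine ⟨X^2 + (C (-s₁) * X + C s₂), ?_, ?_⟩
    · apply (monic_X_pow 2).add_of_left
      exact lt_of_le_of_lt degree_linear_le (by rw [degree_X_pow]; norm_num)
    · have : (Polynomial.aeval β) (X^2 + (C (-s₁) * X + C s₂)) = 0 := by
        simp only [map_add, map_mul, map_pow, aeval_X, aeval_C, map_neg]
        rw [neg_mul, ← add_assoc, ← sub_eq_add_neg]
        exact key
      rwa [Polynomial.aeval_def] at this
  have hβspan : β ∈ Submodule.span F (S : Set B) := by
    rw [hβ, hγ]
    apply Submodule.smul_mem
    refine sub_mem (Submodule.subset_span hαS) ?_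
    rw [hkr]
    exact Submodule.smul_mem _ _ (Submodule.subset_span S.one_mem)
  obtain ⟨u, v, huv⟩ := hmem β (hic β hβspan hint)
  have hβ2 : β = (-( (i π)⁻¹ * i r)) • (1:B) + (i π)⁻¹ • α := by
    rw [hβ, hγ, hkr, smul_sub, smul_smul, neg_smul, sub_eq_add_neg, add_comm]
  have hβ3 : β = (i u) • (1:B) + (i v) • α := by
    rw [huv, algebraMap_smul, algebraMap_smul]
  obtain ⟨h1, h2⟩ := coeff_eq hα (hβ2 ▸ hβ3)
  have hvπ : v * π = 1 := by
    apply iinj (R := R) (F := F)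
    rw [map_mul, map_one, ← h2, inv_mul_cancel₀ hπ0]
  exact hπ.not_isUnit (IsUnit.of_mul_eq_one (a := π) v (by rw [mul_comm]; exact hvπ))


end Part4

namespace Part5
open StmtAux Part2 Part3 Part4 Polynomial
variable {R F B : Type*} [CommRing R] [IsDomain R] [IsDiscreteValuationRing R]
    [Field F] [Algebra R F] [IsFractionRing R F]
    [Ring B] [Nontrivial B] [Algebra F B] [Algebra R B] [IsScalarTower R F B]
variable (trd : B →ₗ[F] F) (nrd : B → F)
    (hchar : ∀ α : B, α ^ 2 - algebraMap F B (trd α) * α + algebraMap F B (nrd α) = 0)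
    (htrd1 : trd 1 = 2)

lemma indepR (α : B) (hα : ∀ c : F, α ≠ algebraMap F B c) {p q : R}
    (h : p • (1:B) + q • α = 0) : p = 0 ∧ q = 0 := by
  have h' : (algebraMap R F p) • (1:B) + (algebraMap R F q) • α = 0 := by
    rw [algebraMap_smul, algebraMap_smul]; exact h
  obtain ⟨h1, h2⟩ := indep_pair hα h'
  exact ⟨iinj (R := R) (F := F) (by rw [h1, map_zero]),
    iinj (R := R) (F := F) (by rw [h2, map_zero])⟩

lemma exists_clear (π : R) (hπ : Irreducible π) (c : F) :
    ∃ (m : ℕ) (a : R), (algebraMap R F π)^m * c = algebraMap R F a := by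
  obtain ⟨⟨a, b⟩, hab⟩ := IsLocalization.surj (nonZeroDivisors R) c
  dsimp only at hab
  have hb0 : (b : R) ≠ 0 := nonZeroDivisors.coe_ne_zero b
  obtain ⟨m, u, hbu⟩ := IsDiscreteValuationRing.eq_unit_mul_pow_irreducible hb0 hπ
  refine ⟨m, a * ↑u⁻¹, ?_⟩
  have key : algebraMap R F (a * ↑u⁻¹) * algebraMap R F (b : R) =
      algebraMap R F a * (algebraMap R F π)^m := by
    rw [← map_pow, ← map_mul, ← map_mul]
    congr 1
    rw [hbu]
    calc a * ↑u⁻¹ * (↑u * π^m) = a * π^m * (↑u⁻¹ * ↑u) := by ring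
    _ = a * π^m := by rw [u.inv_mul, mul_one]
  have hbF0 : algebraMap R F (b : R) ≠ 0 :=
    fun h => hb0 (iinj (R := R) (F := F) (by rw [h, map_zero]))
  apply mul_right_cancel₀ hbF0
  rw [key, mul_assoc, hab]
  ring

lemma clear_bump (π : R) {m l : ℕ} {c : F} {a : R}
    (h : (algebraMap R F π)^m * c = algebraMap R F a) :
    (algebraMap R F π)^(m+l) * c = algebraMap R F (π^l * a) := by
  rw [pow_add, mul_comm ((algebraMap R F π)^m), mul_assoc, h, map_mul, map_pow]

include hchar htrd1 in
lemma backward (π : R) (hπ : Irreducible π) (O : Subalgebra R B)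
    (hOfg : (Subalgebra.toSubmodule O).FG) (α : B) (hαO : α ∈ O)
    (hcond : ∀ r : R, (¬ ∃ s : R, trd (α - algebraMap R B r) = algebraMap R F (π * s)) ∨
        (¬ ∃ s : R, nrd (α - algebraMap R B r) = algebraMap R F (π ^ 2 * s))) :
    ∃ S : Subalgebra R B, S ≤ O ∧ (∀ x ∈ S, ∀ y ∈ S, x * y = y * x) ∧
      Module.Free R S ∧ Module.finrank R S = 2 ∧
      ∀ β ∈ Submodule.span F (S : Set B), IsIntegral R β → β ∈ S := by
  classical
  set i : R →+* F := algebraMap R F with hi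
  have hπ0 : i π ≠ 0 := fun h => hπ.ne_zero (iinj (R := R) (F := F) (by rw [h, map_zero]))
  have hprime : Prime π := UniqueFactorizationMonoid.irreducible_iff_prime.mp hπ
  have hintα : IsIntegral R α := IsIntegral.of_mem_of_fg O hOfg α hαO
  have hα : ∀ c : F, α ≠ algebraMap F B c := by
    intro c hc
    obtain ⟨r₀, hr₀⟩ := scalar_integral (R := R) (hc ▸ hintα)
    have h0 : α - algebraMap R B r₀ = 0 := by
      rw [hc, ← hr₀, sub_eq_zero, IsScalarTower.algebraMap_apply R F B]
    rcases hcond r₀ with h | h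
    · exact h ⟨0, by rw [h0, map_zero, mul_zero, map_zero]⟩
    · refine h ⟨0, ?_⟩
      have h2 := (trd_nrd_scalar trd nrd hchar htrd1 0).2
      rw [map_zero] at h2
      rw [h0, mul_zero, map_zero, h2]
      norm_num
  obtain ⟨t₀, n₀, ht₀, hn₀⟩ := coeffs_mem trd nrd hchar htrd1 α hintα
  have hαα : α * α = t₀ • α - n₀ • (1:B) := by
    rw [mul_self_eq trd nrd hchar, ht₀, hn₀, algebraMap_smul, algebraMap_smul]
  have prod_expand : ∀ a b c d : R, (a • (1:B) + b • α) * (c • (1:B) + d • α)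
      = (a*c - b*d*n₀) • (1:B) + (a*d + b*c + b*d*t₀) • α := by
    intro a b c d
    simp only [add_mul, mul_add, smul_mul_smul_comm, one_mul, mul_one, hαα]
    module
  set M : Submodule R B := Submodule.span R {(1:B), α} with hM
  have h1M : (1:B) ∈ M := Submodule.subset_span (by simp)
  have hαM : α ∈ M := Submodule.subset_span (by simp)
  have hmulM : ∀ x y : B, x ∈ M → y ∈ M → x * y ∈ M := by
    intro x y hx hy
    obtain ⟨a, b, hab⟩ := Submodule.mem_span_pair.mp hx
    obtain ⟨c, d, hcd⟩ := Submodule.mem_span_pair.mp hy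
    rw [← hab, ← hcd, prod_expand]
    exact add_mem (Submodule.smul_mem _ _ h1M) (Submodule.smul_mem _ _ hαM)
  refine ⟨M.toSubalgebra h1M hmulM, ?_, ?_, ?_, ?_, ?_⟩
  · -- S ≤ O
    intro x hx
    rw [Submodule.mem_toSubalgebra] at hx
    have : M ≤ Subalgebra.toSubmodule O := by
      rw [hM, Submodule.span_le]
      rintro z hz
      rcases Set.mem_insert_iff.mp hz with rfl | hz'
      · exact O.one_mem
      · rw [Set.mem_singleton_iff.mp hz']; exact hαO
    exact this hx
  · -- commutativity
    intro x hx y hy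
    rw [Submodule.mem_toSubalgebra] at hx hy
    obtain ⟨a, b, hab⟩ := Submodule.mem_span_pair.mp hx
    obtain ⟨c, d, hcd⟩ := Submodule.mem_span_pair.mp hy
    rw [← hab, ← hcd, prod_expand, prod_expand]
    module
  · -- free
    have hli : LinearIndependent R ![(1:B), α] :=
      LinearIndependent.pair_iff.mpr (fun s t hst => indepR α hα hst)
    have hrange : Submodule.span R (Set.range ![(1:B), α]) = M := by
      rw [hM]; congr 1
      simp only [Matrix.range_cons, Matrix.range_empty, Set.union_empty, Set.union_singleton]
      exact Set.pair_comm α 1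
    have bas : Module.Basis (Fin 2) R M := (Module.Basis.span hli).map (LinearEquiv.ofEq _ _ hrange)
    have bas2 : Module.Basis (Fin 2) R (M.toSubalgebra h1M hmulM) :=
      bas.map ((LinearEquiv.ofEq _ _
        (Submodule.toSubalgebra_toSubmodule M h1M hmulM).symm).trans
        (Subalgebra.toSubmoduleEquiv _))
    exact Module.Free.of_basis bas2
  · -- rank
    have hli : LinearIndependent R ![(1:B), α] :=
      LinearIndependent.pair_iff.mpr (fun s t hst => indepR α hα hst)
    have hrange : Submodule.span R (Set.range ![(1:B), α]) = M := by
      rw [hM]; congr 1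
      simp only [Matrix.range_cons, Matrix.range_empty, Set.union_empty, Set.union_singleton]
      exact Set.pair_comm α 1
    have bas : Module.Basis (Fin 2) R M := (Module.Basis.span hli).map (LinearEquiv.ofEq _ _ hrange)
    have bas2 : Module.Basis (Fin 2) R (M.toSubalgebra h1M hmulM) :=
      bas.map ((LinearEquiv.ofEq _ _
        (Submodule.toSubalgebra_toSubmodule M h1M hmulM).symm).trans
        (Subalgebra.toSubmoduleEquiv _))
    rw [Module.finrank_eq_card_basis bas2]
    simp
  · -- integrally closed
    intro β hβspan hint
    have hspan2 : β ∈ Submodule.span F ({(1:B), α} : Set B) := by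
      have hsub : (M : Set B) ⊆ (Submodule.span F ({(1:B), α} : Set B) : Set B) := by
        rw [hM]
        exact Submodule.span_subset_span R F _
      have : Submodule.span F ((M.toSubalgebra h1M hmulM : Subalgebra R B) : Set B)
          ≤ Submodule.span F ({(1:B), α} : Set B) := by
        rw [Submodule.span_le]
        exact hsub
      exact this hβspan
    obtain ⟨c, d, hcd⟩ := Submodule.mem_span_pair.mp hspan2
    obtain ⟨T, N, hT, hN⟩ := coeffs_mem trd nrd hchar htrd1 β hint
    have hTc : i T = 2*c + d * i t₀ := by
      rw [← hT, ← ht₀, ← hcd, trd_comb trd htrd1]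
    have hNc : i N = c^2 + c*d*(i t₀) + d^2*(i n₀) := by
      rw [← hN, ← ht₀, ← hn₀, ← hcd, nrd_comb trd nrd hchar htrd1]
    have hex : ∃ m : ℕ, (∃ a, (i π)^m * c = i a) ∧ (∃ b, (i π)^m * d = i b) := by
      obtain ⟨m₁, a₁, h₁⟩ := exists_clear π hπ c
      obtain ⟨m₂, a₂, h₂⟩ := exists_clear π hπ d
      exact ⟨m₁ + m₂, ⟨π^m₂ * a₁, clear_bump π h₁⟩,
        ⟨π^m₁ * a₂, by rw [Nat.add_comm m₁ m₂]; exact clear_bump π h₂⟩⟩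
    set m₀ := Nat.find hex with hm₀
    obtain ⟨⟨c', hc'⟩, ⟨d', hd'⟩⟩ := Nat.find_spec hex
    rcases Nat.eq_zero_or_pos m₀ with hz | hpos
    · rw [← hm₀] at hc' hd'
      rw [hz, pow_zero, one_mul] at hc' hd'
      rw [Submodule.mem_toSubalgebra]
      have hβeq : β = c' • (1:B) + d' • α := by
        rw [← hcd, hc', hd', algebraMap_smul, algebraMap_smul]
      rw [hβeq]
      exact add_mem (Submodule.smul_mem _ _ h1M) (Submodule.smul_mem _ _ hαM)
    · exfalso
      have hnotboth : ¬(π ∣ c' ∧ π ∣ d') := by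
        rintro ⟨⟨c'', rfl⟩, ⟨d'', rfl⟩⟩
        have hlt : m₀ - 1 < m₀ := by omega
        apply Nat.find_min hex hlt
        have hpow : (i π) * (i π)^(m₀-1) = (i π)^m₀ := by
          rw [← pow_succ']
          congr 1
          omega
        constructor
        · refine ⟨c'', mul_left_cancel₀ hπ0 ?_⟩
          rw [← mul_assoc, hpow, hc', map_mul]
        · refine ⟨d'', mul_left_cancel₀ hπ0 ?_⟩
          rw [← mul_assoc, hpow, hd', map_mul]
      have e₁ : π^m₀ * T = 2*c' + d'*t₀ := by
        apply iinj (R := R) (F := F)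
        have step : (i π)^m₀ * (2*c + d * i t₀) = 2*(i c') + (i d')*(i t₀) := by
          rw [← hc', ← hd']; ring
        rw [map_mul, map_pow, hTc, step, map_add, map_mul, map_mul, map_ofNat]
      have e₂ : π^(2*m₀) * N = c'^2 + c'*d'*t₀ + d'^2*n₀ := by
        apply iinj (R := R) (F := F)
        have step : (i π)^(2*m₀) * (c^2 + c*d*(i t₀) + d^2*(i n₀))
            = (i c')^2 + (i c')*(i d')*(i t₀) + (i d')^2*(i n₀) := by
          rw [← hc', ← hd', two_mul, pow_add]; ring
        rw [map_mul, map_pow, hNc, step]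
        simp only [map_add, map_mul, map_pow]
        rfl
      have hdvd₁ : π ∣ 2*c' + d'*t₀ := by
        rw [← e₁]
        exact Dvd.dvd.mul_right (dvd_pow_self π (by omega)) T
      have hdvd₂ : π^2 ∣ c'^2 + c'*d'*t₀ + d'^2*n₀ := by
        rw [← e₂]
        exact Dvd.dvd.mul_right (pow_dvd_pow π (by omega)) N
      by_cases hd'π : π ∣ d'
      · have h1 : π ∣ c'*d'*t₀ := (Dvd.dvd.mul_left hd'π c').mul_right t₀
        have h2 : π ∣ d'^2*n₀ := (dvd_pow hd'π two_ne_zero).mul_right n₀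
        have h3 : π ∣ (c'^2 + c'*d'*t₀ + d'^2*n₀) :=
          (dvd_pow_self π two_ne_zero).trans hdvd₂
        have hπc2 : π ∣ c'^2 := by
          have : c'^2 = (c'^2 + c'*d'*t₀ + d'^2*n₀) - c'*d'*t₀ - d'^2*n₀ := by ring
          rw [this]
          exact dvd_sub (dvd_sub h3 h1) h2
        exact hnotboth ⟨hprime.dvd_of_dvd_pow hπc2, hd'π⟩
      · have hu : IsUnit d' := by
          by_contra h
          exact hd'π (Ideal.mem_span_singleton.mp
            (by rw [← hπ.maximalIdeal_eq]; exact (IsLocalRing.mem_maximalIdeal d').mpr h))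
        obtain ⟨u, hu'⟩ := hu
        set r : R := -(c' * ↑u⁻¹) with hr
        have hur : (↑u : R) * r = -c' := by
          rw [hr]; linear_combination (-c') * u.mul_inv
        have claim1 : π ∣ (t₀ - 2*r) := by
          have hkey : (↑u : R) * (t₀ - 2*r) = 2*c' + d'*t₀ := by
            linear_combination t₀ * hu' - 2*hur
          have hd : π ∣ (↑u : R) * (t₀ - 2*r) := by rw [hkey]; exact hdvd₁
          rcases hprime.dvd_mul.mp hd with h | h
          · exact absurd (isUnit_of_dvd_unit h u.isUnit) hπ.not_isUnit
          · exact h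
        have claim2 : π^2 ∣ (r^2 - r*t₀ + n₀) := by
          have hkey : (↑u : R)^2 * (r^2 - r*t₀ + n₀) = c'^2 + c'*d'*t₀ + d'^2*n₀ := by
            linear_combination ((↑u : R)*r - c' - t₀*(↑u : R)) * hur
              + (t₀*c' + n₀*((↑u : R) + d')) * hu'
          have h2 : π^2 ∣ (↑u : R)^2 * (r^2 - r*t₀ + n₀) := by rw [hkey]; exact hdvd₂
          rwa [← Units.val_pow_eq_pow_val, Units.dvd_mul_left] at h2
        obtain ⟨s₁, hs₁⟩ := claim1
        obtain ⟨s₂, hs₂⟩ := claim2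
        have htr : trd (α - algebraMap R B r) = i (π * s₁) := by
          rw [shift_repr (F := F) α r, trd_comb trd htrd1, ht₀]
          have : i (π * s₁) = i t₀ - 2 * i r := by
            rw [← hs₁, map_sub, map_mul, map_ofNat]
          rw [this]; ring
        have hnr : nrd (α - algebraMap R B r) = i (π^2 * s₂) := by
          rw [shift_repr (F := F) α r, nrd_comb trd nrd hchar htrd1, ht₀, hn₀]
          have : i (π^2 * s₂) = (i r)^2 - (i r)*(i t₀) + i n₀ := by
            rw [← hs₂, map_add, map_sub, map_pow, map_mul]
          rw [this]; ring
        rcases hcond r with h | h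
        · exact h ⟨s₁, htr⟩
        · exact h ⟨s₂, hnr⟩

end Part5

namespace Part6
open StmtAux Part2 Part3 Part4 Part5 Polynomial
variable {R F B : Type*} [CommRing R] [IsDomain R] [IsDiscreteValuationRing R]
    [Field F] [Algebra R F] [IsFractionRing R F]
    [Ring B] [Nontrivial B] [Algebra F B] [Algebra R B] [IsScalarTower R F B]
variable (trd : B →ₗ[F] F) (nrd : B → F)
    (hchar : ∀ α : B, α ^ 2 - algebraMap F B (trd α) * α + algebraMap F B (nrd α) = 0)
    (htrd1 : trd 1 = 2)

include hchar in
lemma forward (π : R) (hπ : Irreducible π) (O : Subalgebra R B)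
    (hOfg : (Subalgebra.toSubmodule O).FG)
    (hbasic : ∃ S : Subalgebra R B, S ≤ O ∧ (∀ x ∈ S, ∀ y ∈ S, x * y = y * x) ∧
      Module.Free R S ∧ Module.finrank R S = 2 ∧
      ∀ β ∈ Submodule.span F (S : Set B), IsIntegral R β → β ∈ S) :
    ∃ α ∈ O, ∀ r : R,
      (¬ ∃ s : R, trd (α - algebraMap R B r) = algebraMap R F (π * s)) ∨
      (¬ ∃ s : R, nrd (α - algebraMap R B r) = algebraMap R F (π ^ 2 * s)) := by
  obtain ⟨S, hSO, hcomm, hfree, hrank, hic⟩ := hbasic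
  set i : R →+* F := algebraMap R F with hi
  have hπF0 : i π ≠ 0 := fun h => hπ.ne_zero (iinj (R := R) (F := F) (by rw [h, map_zero]))
  -- S is module-finite over R
  haveI hNoeth : IsNoetherian R (Subalgebra.toSubmodule O) :=
    isNoetherian_of_fg_of_noetherian _ hOfg
  have hSle : Subalgebra.toSubmodule S ≤ Subalgebra.toSubmodule O := hSO
  have hSfg : (Subalgebra.toSubmodule S).FG := by
    have h1 : ((Subalgebra.toSubmodule S).comap
        (Subalgebra.toSubmodule O).subtype).FG := IsNoetherian.noetherian _
    have h2 := Submodule.FG.map ((Subalgebra.toSubmodule O).subtype) h1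
    rwa [Submodule.map_comap_subtype, inf_eq_right.mpr hSle] at h2
  haveI hSfin : Module.Finite R S := Module.Finite.iff_fg.mpr hSfg
  haveI : Module.Free R S := hfree
  let b : Module.Basis (Fin 2) R S := (Module.finBasis R S).reindex (finCongr hrank)
  have hone : b.repr 1 0 • b 0 + b.repr 1 1 • b 1 = (1 : S) := by
    have h := b.sum_repr 1
    rwa [Fin.sum_univ_two] at h
  set a₀ : R := b.repr 1 0 with ha₀
  set a₁ : R := b.repr 1 1 with ha₁
  have hnotboth : ¬(π ∣ a₀ ∧ π ∣ a₁) := by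
    rintro ⟨⟨c₀, hc₀⟩, ⟨c₁, hc₁⟩⟩
    set x : S := c₀ • b 0 + c₁ • b 1 with hx
    have hπx : (π : R) • x = 1 := by
      rw [hx, smul_add, smul_smul, smul_smul, ← hc₀, ← hc₁, hone]
    have hπxB : (i π) • ((x : B)) = 1 := by
      have h1 : ((π • x : S) : B) = π • (x : B) := rfl
      have h2 := congrArg (Subtype.val) hπx
      rw [h1] at h2
      rw [algebraMap_smul]
      exact h2
    have hxint : IsIntegral R (x : B) := IsIntegral.of_mem_of_fg O hOfg _ (hSO x.2)
    have hxval : (x : B) = algebraMap F B (i π)⁻¹ := by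
      rw [Algebra.algebraMap_eq_smul_one]
      calc (x : B) = (i π)⁻¹ • ((i π) • (x : B)) := by
            rw [smul_smul, inv_mul_cancel₀ hπF0, one_smul]
      _ = (i π)⁻¹ • (1 : B) := by rw [hπxB]
    obtain ⟨w, hw⟩ := scalar_integral (R := R) (hxval ▸ hxint)
    have hwπ : w * π = 1 := by
      apply iinj (R := R) (F := F)
      rw [map_mul, map_one, hw, inv_mul_cancel₀ hπF0]
    exact hπ.not_isUnit (IsUnit.of_mul_eq_one (a := π) w (by rw [mul_comm]; exact hwπ))
  have hnon : ∀ z : R, ¬IsUnit z → π ∣ z := by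
    intro z hz
    exact Ideal.mem_span_singleton.mp
      (by rw [← hπ.maximalIdeal_eq]; exact (IsLocalRing.mem_maximalIdeal z).mpr hz)
  have main : ∀ (e₁ e₂ : S) (u w : R), IsUnit u → u • e₁ + w • e₂ = 1 →
      (∀ y : S, ∃ p q : R, y = p • e₁ + q • e₂) →
      (∀ p q : R, p • e₁ + q • e₂ = 0 → p = 0 ∧ q = 0) →
      ∃ α ∈ O, ∀ r : R,
        (¬ ∃ s : R, trd (α - algebraMap R B r) = algebraMap R F (π * s)) ∨
        (¬ ∃ s : R, nrd (α - algebraMap R B r) = algebraMap R F (π ^ 2 * s)) := by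
    intro e₁ e₂ u w hu hone' hrepr hindep
    obtain ⟨U, hU⟩ := hu
    set α : B := (e₂ : B) with hαdef
    have hαS : α ∈ S := e₂.2
    refine ⟨α, hSO hαS, ?_⟩
    have hindepB : ∀ p q : R, p • (1:B) + q • α = 0 → p = 0 ∧ q = 0 := by
      intro p q h
      have hS0 : p • (1:S) + q • e₂ = 0 := by
        apply Subtype.ext
        simpa using h
      rw [← hone'] at hS0
      have hcomb : (p*u) • e₁ + (p*w + q) • e₂ = 0 := by
        rw [← hS0]; module
      obtain ⟨h1, h2⟩ := hindep _ _ hcomb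
      have hu0 : u ≠ 0 := by rw [← hU]; exact Units.ne_zero U
      have hp : p = 0 := by
        rcases mul_eq_zero.mp h1 with h | h
        · exact h
        · exact absurd h hu0
      refine ⟨hp, ?_⟩
      rw [hp] at h2
      simpa using h2
    have hα : ∀ c : F, α ≠ algebraMap F B c := by
      intro c hc
      have hint : IsIntegral R α := IsIntegral.of_mem_of_fg O hOfg _ (hSO hαS)
      obtain ⟨w₀, hw₀⟩ := scalar_integral (R := R) (hc ▸ hint)
      have hz : w₀ • (1:B) + (-1 : R) • α = 0 := by
        rw [hc, ← hw₀, neg_one_smul, ← Algebra.algebraMap_eq_smul_one,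
          ← IsScalarTower.algebraMap_apply R F B, add_neg_cancel]
      obtain ⟨_, hcontra⟩ := hindepB _ _ hz
      norm_num at hcontra
    have hmem : ∀ x ∈ S, ∃ p q : R, x = p • (1:B) + q • α := by
      intro x hx
      obtain ⟨p, q, hpq⟩ := hrepr ⟨x, hx⟩
      have hvu : (↑U⁻¹ : R) * u = 1 := by rw [← hU]; exact U.inv_mul
      have he₁ : e₁ = (↑U⁻¹ : R) • ((1:S) - w • e₂) := by
        have h' : u • e₁ = (1:S) - w • e₂ := eq_sub_iff_add_eq.mpr hone'
        calc e₁ = ((↑U⁻¹ : R) * u) • e₁ := by rw [hvu, one_smul]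
        _ = (↑U⁻¹ : R) • (u • e₁) := by rw [mul_smul]
        _ = _ := by rw [h']
      refine ⟨p * ↑U⁻¹, q - p * ↑U⁻¹ * w, ?_⟩
      have hx2 : (⟨x, hx⟩ : S) = (p * ↑U⁻¹) • (1:S) + (q - p * ↑U⁻¹ * w) • e₂ := by
        rw [hpq, he₁]; module
      have hx3 := congrArg Subtype.val hx2
      simpa using hx3
    exact forward_core trd nrd hchar π hπ S hic α hαS hα hmem
  have hrepr01 : ∀ y : S, ∃ p q : R, y = p • b 0 + q • b 1 := by
    intro y
    refine ⟨b.repr y 0, b.repr y 1, ?_⟩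
    have h := b.sum_repr y
    rw [Fin.sum_univ_two] at h
    exact h.symm
  have hindep01 : ∀ p q : R, p • b 0 + q • b 1 = 0 → p = 0 ∧ q = 0 := by
    intro p q h
    have h0 := congrArg (fun z => b.repr z 0) h
    have h1 := congrArg (fun z => b.repr z 1) h
    simp [Module.Basis.repr_self, Finsupp.single_apply] at h0 h1
    exact ⟨h0, h1⟩
  by_cases hu₀ : IsUnit a₀
  · exact main (b 0) (b 1) a₀ a₁ hu₀ hone hrepr01 hindep01
  · have hu₁ : IsUnit a₁ := by
      by_contra hu₁
      exact hnotboth ⟨hnon _ hu₀, hnon _ hu₁⟩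
    refine main (b 1) (b 0) a₁ a₀ hu₁ (by rw [add_comm]; exact hone)
      (fun y => ?_) (fun p q h => ?_)
    · obtain ⟨p, q, hpq⟩ := hrepr01 y
      exact ⟨q, p, by rw [hpq, add_comm]⟩
    · obtain ⟨h1, h2⟩ := hindep01 q p (by rw [add_comm]; exact h)
      exact ⟨h2, h1⟩

end Part6

/-- over a DVR `R` with uniformizer `π`, a quaternion order `O ⊆ B` is basic
iff there is `α ∈ O` such that for all `r ∈ R`, `π ∤ trd(α - r)` or `π² ∤ nrd(α - r)`. -/
theorem stmt_0 (R F B : Type*) [CommRing R] [IsDomain R] [IsDiscreteValuationRing R]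
    [Field F] [Algebra R F] [IsFractionRing R F]
    [Ring B] [Algebra F B] [Algebra R B] [IsScalarTower R F B]
    [Algebra.IsCentral F B] [IsSimpleRing B] (hB : Module.finrank F B = 4)
    (π : R) (hπ : Irreducible π)
    (trd : B →ₗ[F] F) (nrd : B → F)
    (hchar : ∀ α : B, α ^ 2 - algebraMap F B (trd α) * α + algebraMap F B (nrd α) = 0)
    (htrd1 : trd 1 = 2)
    (O : Subalgebra R B) (hO : IsQuaternionOrder R F B O) :
    IsBasicOrder R F B O ↔
      ∃ α ∈ O, ∀ r : R,
        (¬ ∃ s : R, trd (α - algebraMap R B r) = algebraMap R F (π * s)) ∨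
        (¬ ∃ s : R, nrd (α - algebraMap R B r) = algebraMap R F (π ^ 2 * s)) := by
  haveI : Nontrivial B := by
    by_contra h
    rw [not_nontrivial_iff_subsingleton] at h
    rw [Module.finrank_zero_of_subsingleton] at hB
    norm_num at hB
  have hOfg : (Subalgebra.toSubmodule O).FG := Module.Finite.iff_fg.mp hO.1
  unfold IsBasicOrder
  constructor
  · intro h
    exact Part6.forward trd nrd hchar π hπ O hOfg h
  · rintro ⟨α, hαO, hcond⟩
    exact Part5.backward trd nrd hchar htrd1 π hπ O hOfg α hαO hcond
end

section
/- Let R be a DVR with maximal ideal p = πR, B a quaternion algebra over Frac(R), and O ⊆ B an R-order that is a local ring. Then every α in the Jacobson radical of O satisfies π ∣ trd(α), π ∣ nrd(α), and α² ∈ pO. -/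
theorem locAdd {S : Type*} [Ring S] [IsLocalRing S] {a b : S} (h : IsUnit (a + b)) :
    IsUnit a ∨ IsUnit b := by
  obtain ⟨u, hu⟩ := h
  have h1 : a * ↑u⁻¹ + b * ↑u⁻¹ = 1 := by
    rw [← add_mul, ← hu, Units.mul_inv]
  rcases IsLocalRing.isUnit_or_isUnit_of_add_one h1 with h' | h'
  · left; simpa [mul_assoc] using h'.mul u.isUnit
  · right; simpa [mul_assoc] using h'.mul u.isUnit

theorem trd_nrd_mem {R F B : Type*} [CommRing R] [IsDomain R] [IsDiscreteValuationRing R]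
    [Field F] [Algebra R F] [IsFractionRing R F]
    [Ring B] [Algebra F B] [Algebra R B] [IsScalarTower R F B] [Nontrivial B]
    (trd : B →ₗ[F] F) (nrd : B → F)
    (hchar : ∀ α : B, α ^ 2 - algebraMap F B (trd α) * α + algebraMap F B (nrd α) = 0)
    (htrd1 : trd 1 = 2) {γ : B} (hγ : IsIntegral R γ) :
    (∃ a : R, trd γ = algebraMap R F a) ∧ (∃ b : R, nrd γ = algebraMap R F b) := by
  classical
  have hinj : Function.Injective (algebraMap F B) := (algebraMap F B).injective
  set q : Polynomial F := Polynomial.X ^ 2 - Polynomial.C (trd γ) * Polynomial.X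
      + Polynomial.C (nrd γ) with hqdef
  have hq : Polynomial.aeval γ q = 0 := by
    simp only [hqdef, map_add, map_sub, map_mul, map_pow, Polynomial.aeval_X, Polynomial.aeval_C]
    exact hchar γ
  by_cases hs : ∃ c : F, γ = algebraMap F B c
  · obtain ⟨c, rfl⟩ := hs
    have hti : trd (algebraMap F B c) = 2 * c := by
      rw [Algebra.algebraMap_eq_smul_one, map_smul, htrd1, smul_eq_mul, mul_comm]
    have h0 : algebraMap F B (c ^ 2 - trd (algebraMap F B c) * c + nrd (algebraMap F B c)) = 0 := by
      rw [map_add, map_sub, map_mul, map_pow]; exact hchar _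
    have h1 : c ^ 2 - trd (algebraMap F B c) * c + nrd (algebraMap F B c) = 0 := by
      apply hinj; rw [h0, map_zero]
    have hn : nrd (algebraMap F B c) = c ^ 2 := by
      rw [hti] at h1; linear_combination h1
    have hc : ∃ c' : R, algebraMap R F c' = c := by
      rw [← IsIntegrallyClosed.isIntegral_iff]
      exact (isIntegral_algHom_iff (IsScalarTower.toAlgHom R F B) hinj).mp hγ
    obtain ⟨c', rfl⟩ := hc
    refine ⟨⟨2 * c', ?_⟩, ⟨c' ^ 2, ?_⟩⟩
    · rw [hti, map_mul, map_ofNat]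
    · rw [hn, map_pow]
  · push_neg at hs
    have hγF : IsIntegral F γ := hγ.tower_top
    have hpm : (minpoly F γ).Monic := minpoly.monic hγF
    have hdvd : minpoly F γ ∣ q := minpoly.dvd F γ hq
    have hqm : q.Monic := by
      rw [hqdef]; monicity!
    have hqd : q.natDegree = 2 := by
      rw [hqdef]
      compute_degree!
    have hq0 : q ≠ 0 := hqm.ne_zero
    have hle : (minpoly F γ).natDegree ≤ 2 := hqd ▸ Polynomial.natDegree_le_of_dvd hdvd hq0
    have hpos : 0 < (minpoly F γ).natDegree := minpoly.natDegree_pos hγF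
    have h2 : (minpoly F γ).natDegree = 2 := by
      rcases Nat.lt_or_ge (minpoly F γ).natDegree 2 with h | h
      · exfalso
        have h1 : (minpoly F γ).natDegree = 1 := by omega
        have hX := hpm.eq_X_add_C h1
        have h0 := minpoly.aeval F γ
        rw [hX] at h0
        simp only [map_add, Polynomial.aeval_X, Polynomial.aeval_C] at h0
        exact hs (-(minpoly F γ).coeff 0) (by rw [map_neg]; exact eq_neg_of_add_eq_zero_left h0)
      · omega
    -- minpoly F γ = q
    have heq : minpoly F γ = q := by
      obtain ⟨r, hr⟩ := hdvd
      have hp0 : minpoly F γ ≠ 0 := hpm.ne_zero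
      have hr0 : r ≠ 0 := by rintro rfl; rw [mul_zero] at hr; exact hq0 hr
      have hdeg : q.natDegree = (minpoly F γ).natDegree + r.natDegree := by
        rw [hr, Polynomial.natDegree_mul hp0 hr0]
      have hrd : r.natDegree = 0 := by omega
      have hrC : r = Polynomial.C (r.coeff 0) := Polynomial.eq_C_of_natDegree_eq_zero hrd
      have hlc : r.coeff 0 = 1 := by
        have h3 := hqm.leadingCoeff
        rw [hr, Polynomial.leadingCoeff_mul, hpm.leadingCoeff, one_mul] at h3
        rwa [Polynomial.leadingCoeff, hrd] at h3
      rw [hr, hrC, hlc, map_one, mul_one]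
    -- dvd of mapped minpoly over R
    have hPm : (minpoly R γ).Monic := minpoly.monic hγ
    have hPd : q ∣ (minpoly R γ).map (algebraMap R F) := by
      rw [← heq]
      apply minpoly.dvd
      rw [Polynomial.aeval_map_algebraMap]
      exact minpoly.aeval R γ
    obtain ⟨g, hg⟩ := IsIntegrallyClosed.eq_map_mul_C_of_dvd (K := F) hPm hPd
    rw [hqm.leadingCoeff, map_one, mul_one] at hg
    have hc1 : q.coeff 1 = -(trd γ) := by
      rw [hqdef]
      simp [Polynomial.coeff_X_pow]
    have hc0 : q.coeff 0 = nrd γ := by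
      rw [hqdef]
      simp [Polynomial.coeff_X_pow]
    constructor
    · refine ⟨-(g.coeff 1), ?_⟩
      rw [map_neg, ← Polynomial.coeff_map, hg, hc1, neg_neg]
    · refine ⟨g.coeff 0, ?_⟩
      rw [← Polynomial.coeff_map, hg, hc0]

/-- if `O` is a quaternion order over a DVR that is a local ring, then every
`α` in the Jacobson radical of `O` satisfies `π ∣ trd α`, `π ∣ nrd α`, and `α² ∈ pO`. -/
theorem stmt_3 (R F B : Type*) [CommRing R] [IsDomain R] [IsDiscreteValuationRing R]
    [Field F] [Algebra R F] [IsFractionRing R F]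
    [Ring B] [Algebra F B] [Algebra R B] [IsScalarTower R F B]
    [Algebra.IsCentral F B] [IsSimpleRing B] (hB : Module.finrank F B = 4)
    (π : R) (hπ : Irreducible π)
    (trd : B →ₗ[F] F) (nrd : B → F)
    (hchar : ∀ α : B, α ^ 2 - algebraMap F B (trd α) * α + algebraMap F B (nrd α) = 0)
    (htrd1 : trd 1 = 2)
    (O : Subalgebra R B) (hO : IsQuaternionOrder R F B O)
    (hloc : IsLocalRing O)
    (α : O) (hα : α ∈ Ideal.jacobson (⊥ : Ideal O)) :
    (∃ s : R, trd (α : B) = algebraMap R F (π * s)) ∧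
    (∃ s : R, nrd (α : B) = algebraMap R F (π * s)) ∧
    (α : B) ^ 2 ∈ (Ideal.span {π} : Ideal R) • Subalgebra.toSubmodule O := by
  obtain ⟨hfin, -⟩ : Module.Finite R O ∧ Submodule.span F (O : Set B) = ⊤ := hO
  have hint : Algebra.IsIntegral R O := Algebra.IsIntegral.of_finite R O
  have memR : ∀ x : O, (∃ a, trd (x : B) = algebraMap R F a) ∧
      (∃ b, nrd (x : B) = algebraMap R F b) := fun x =>
    trd_nrd_mem trd nrd hchar htrd1 ((Algebra.IsIntegral.isIntegral x).map O.val)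
  -- α is not a unit in O
  have hnu : ¬ IsUnit α := by
    intro h
    obtain ⟨M, hM⟩ := Ideal.exists_maximal O
    have hmem : α ∈ M := by
      rw [Ideal.jacobson, Ideal.mem_sInf] at hα
      exact hα ⟨bot_le, hM⟩
    exact hM.ne_top (M.eq_top_of_isUnit_mem hmem h)
  -- nonunits of R are divisible by π
  have hdvd : ∀ r : R, ¬ IsUnit r → π ∣ r := by
    intro r hr
    rw [← Ideal.mem_span_singleton, ← (IsDiscreteValuationRing.irreducible_iff_uniformizer π).mp hπ]
    exact (IsLocalRing.mem_maximalIdeal r).mpr hr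
  obtain ⟨⟨tr, htr⟩, ⟨nr, hnr⟩⟩ := memR α
  -- the coercion of algebraMap R O
  have hcoe : ∀ r : R, ((algebraMap R O r : O) : B) = algebraMap F B (algebraMap R F r) := by
    intro r
    rw [← IsScalarTower.algebraMap_apply R F B]
    rfl
  -- the key equation in B
  have hxe : ∀ x : B, x * (algebraMap F B (trd x) - x) = algebraMap F B (nrd x) := by
    intro x
    have h := hchar x
    rw [add_eq_zero_iff_eq_neg] at h
    have hN : algebraMap F B (nrd x) = algebraMap F B (trd x) * x - x ^ 2 := by
      rw [← neg_neg (algebraMap F B (nrd x)), ← h, neg_sub]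
    rw [hN, mul_sub, ← Algebra.commutes, sq]
  -- the key equation in O
  have key : α * (algebraMap R O tr - α) = algebraMap R O nr := by
    apply Subtype.ext
    push_cast
    rw [IsScalarTower.algebraMap_apply R F B tr, IsScalarTower.algebraMap_apply R F B nr,
      ← htr, ← hnr]
    exact hxe (α : B)
  -- π divides nr
  have hn_nonunit : ¬ IsUnit nr := by
    intro hu
    apply hnu
    obtain ⟨m, hm⟩ := hu.exists_right_inv
    set β : O := algebraMap R O tr - α with hβ
    have hβα : β * α = α * β := by
      rw [hβ, sub_mul, mul_sub, Algebra.commutes]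
    have h1 : α * (β * algebraMap R O m) = 1 := by
      rw [← mul_assoc, key, ← map_mul, hm, map_one]
    have h2 : (β * algebraMap R O m) * α = 1 := by
      rw [mul_assoc, Algebra.commutes m (α : O), ← mul_assoc, hβα, mul_assoc]
      exact h1
    exact ⟨⟨α, β * algebraMap R O m, h1, h2⟩, rfl⟩
  obtain ⟨s₂, hs₂⟩ := hdvd nr hn_nonunit
  -- nrd result
  have hnrd : nrd (α : B) = algebraMap R F (π * s₂) := by rw [hnr, hs₂]
  -- trd result
  have htrd : ∃ s : R, trd (α : B) = algebraMap R F (π * s) := by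
    by_cases htru : IsUnit tr
    · -- then (tr - α) is a unit and α ∈ πO
      have hγu : IsUnit (algebraMap R O tr - α) := by
        have hsum : IsUnit ((algebraMap R O tr - α) + α) := by
          rw [sub_add_cancel]
          exact htru.map (algebraMap R O)
        rcases locAdd hsum with h | h
        · exact h
        · exact absurd h hnu
      obtain ⟨γu, hγu'⟩ := hγu
      have hαγ : α * ↑γu = algebraMap R O (π * s₂) := by
        rw [hγu', key, hs₂]
      have hαeq : α = algebraMap R O π * (algebraMap R O s₂ * ↑γu⁻¹) := by
        calc α = α * ↑γu * ↑γu⁻¹ := by rw [mul_assoc, Units.mul_inv, mul_one]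
          _ = algebraMap R O (π * s₂) * ↑γu⁻¹ := by rw [hαγ]
          _ = algebraMap R O π * (algebraMap R O s₂ * ↑γu⁻¹) := by rw [map_mul, mul_assoc]
      obtain ⟨d, hd⟩ := (memR (algebraMap R O s₂ * ↑γu⁻¹)).1
      refine ⟨d, ?_⟩
      have hcoe2 : (α : B)
          = algebraMap F B (algebraMap R F π) * ((algebraMap R O s₂ * ↑γu⁻¹ : O) : B) := by
        conv_lhs => rw [hαeq]
        push_cast
        rw [IsScalarTower.algebraMap_apply R F B π]
      rw [hcoe2, ← Algebra.smul_def, map_smul, smul_eq_mul, hd, ← map_mul]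
    · obtain ⟨s₁, hs₁⟩ := hdvd tr htru
      exact ⟨s₁, by rw [htr, hs₁]⟩
  -- the squared statement
  obtain ⟨a, ha⟩ := htrd
  have hsq : (α : B) ^ 2 = π • ((a • (α : B)) - s₂ • (1 : B)) := by
    have h := hchar (α : B)
    rw [add_eq_zero_iff_eq_neg, sub_eq_iff_eq_add] at h
    have h2 : (α : B) ^ 2
        = algebraMap F B (trd (α : B)) * α - algebraMap F B (nrd (α : B)) := by
      rw [h]; exact (neg_add_eq_sub _ _)
    rw [h2, ha, hnrd, smul_sub, smul_smul, smul_smul,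
      ← IsScalarTower.algebraMap_apply R F B, ← IsScalarTower.algebraMap_apply R F B,
      ← Algebra.smul_def, Algebra.algebraMap_eq_smul_one]
  refine ⟨⟨a, ha⟩, ⟨s₂, hnrd⟩, ?_⟩
  rw [hsq]
  exact Submodule.smul_mem_smul (Ideal.mem_span_singleton_self π)
    (Submodule.sub_mem _ (Submodule.smul_mem _ a α.2) (Submodule.smul_mem _ s₂ (Subalgebra.one_mem O)))
end

section
/- Let R be a DVR with maximal ideal p = πR, B a quaternion algebra over Frac(R), and O ⊆ B an R-order that is a local ring and is not basic (contains no integrally closed quadratic R-subalgebra). Then every α ∈ rad O satisfies π² ∣ nrd(α) and α² ∈ p·(rad O). -/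
open Polynomial

/-! ### Auxiliary lemmas on (possibly noncommutative) local rings -/

section LocalNC
variable {A : Type*} [Ring A]

private lemma qa_jac_ne_top [Nontrivial A] : Ideal.jacobson (⊥ : Ideal A) ≠ ⊤ := by
  obtain ⟨M, hM⟩ := Ideal.exists_maximal A
  intro h
  have hle : Ideal.jacobson (⊥ : Ideal A) ≤ M := sInf_le ⟨bot_le, hM⟩
  exact hM.ne_top (top_le_iff.mp (h ▸ hle))

private lemma qa_isUnit_of_left_inverse [IsLocalRing A] {x y : A} (h : y * x = 1) :
    IsUnit x := by
  have hidem : (x * y) * (x * y) = x * y := by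
    calc (x * y) * (x * y) = x * (y * x) * y := by noncomm_ring
    _ = x * y := by rw [h]; noncomm_ring
  rcases IsLocalRing.isUnit_or_isUnit_of_add_one (a := x*y) (b := 1 - x*y)
    (by rw [add_sub_cancel]) with hu | hu
  · have h2 : x * y = 1 := hu.mul_left_cancel (by rw [mul_one, hidem])
    exact ⟨⟨x, y, h2, h⟩, rfl⟩
  · exfalso
    have hidem2 : (1 - x*y) * (1 - x*y) = 1 - x*y := by
      have h3 : (1 - x*y) * (1 - x*y) = 1 - x*y - (x*y - (x*y)*(x*y)) := by noncomm_ring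
      rw [h3, hidem]; simp
    have h1 : (1 : A) - x*y = 1 := hu.mul_left_cancel (by rw [mul_one, hidem2])
    have hxy : x * y = 0 := by
      have := sub_eq_iff_eq_add.mp h1; simpa using this.symm
    have : (1 : A) = 0 := by
      calc (1:A) = 1 * 1 := by rw [mul_one]
      _ = (y*x) * (y*x) := by rw [h]
      _ = y * (x*y) * x := by noncomm_ring
      _ = 0 := by rw [hxy]; noncomm_ring
    exact one_ne_zero this

private lemma qa_mem_jac_of_nonunit [IsLocalRing A] {x : A} (hx : ¬ IsUnit x) :
    x ∈ Ideal.jacobson (⊥ : Ideal A) := by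
  refine Ideal.mem_sInf.mpr ?_
  rintro M ⟨-, hM⟩
  by_contra hxM
  have hlt : M < M ⊔ Ideal.span {x} := by
    refine lt_of_le_of_ne le_sup_left (fun hEq => hxM ?_)
    have : x ∈ M ⊔ Ideal.span {x} := Ideal.mem_sup_right (Ideal.subset_span rfl)
    rwa [← hEq] at this
  have htop : M ⊔ Ideal.span {x} = ⊤ := hM.1.2 _ hlt
  have h1 : (1 : A) ∈ M ⊔ Ideal.span {x} := htop ▸ Submodule.mem_top
  obtain ⟨m, hm, z, hz, hmz⟩ := Submodule.mem_sup.mp h1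
  obtain ⟨y, hy⟩ := Submodule.mem_span_singleton.mp hz
  rw [smul_eq_mul] at hy
  subst hy
  have hyx : ¬ IsUnit (y * x) := by
    intro hu
    exact hx (qa_isUnit_of_left_inverse (y := (↑hu.unit⁻¹ : A) * y)
      (by rw [mul_assoc, IsUnit.val_inv_mul]))
  have : IsUnit m ∨ IsUnit (y * x) :=
    IsLocalRing.isUnit_or_isUnit_of_add_one hmz
  rcases this with hu | hu
  · exact hM.ne_top (M.eq_top_of_isUnit_mem hm hu)
  · exact hyx hu

private lemma qa_mem_jac_of_sq [IsLocalRing A] {x : A}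
    (h : x * x ∈ Ideal.jacobson (⊥ : Ideal A)) :
    x ∈ Ideal.jacobson (⊥ : Ideal A) := by
  by_cases hu : IsUnit x
  · exact absurd (Ideal.eq_top_of_isUnit_mem _ h (hu.mul hu)) qa_jac_ne_top
  · exact qa_mem_jac_of_nonunit hu
end LocalNC

/-! ### Integrality of coefficients of quadratic relations -/

section Quad
variable {R F B : Type*} [CommRing R] [IsDomain R] [IsDiscreteValuationRing R]
    [Field F] [Algebra R F] [IsFractionRing R F]
    [Ring B] [Nontrivial B] [Algebra F B] [Algebra R B] [IsScalarTower R F B]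

private lemma qa_scalar_integral {c : F} (h : IsIntegral R (algebraMap F B c)) :
    ∃ r : R, algebraMap R F r = c := by
  have h2 : IsIntegral R c := by
    rw [← isIntegral_algHom_iff (IsScalarTower.toAlgHom R F B)
      (RingHom.injective (algebraMap F B))]
    exact h
  exact IsIntegrallyClosed.isIntegral_iff.mp h2

private lemma qa_quad_coeff_integral {β : B} (hint : IsIntegral R β)
    (hnr : β ∉ Set.range (algebraMap F B)) {u v : F}
    (hq : β^2 - algebraMap F B u * β + algebraMap F B v = 0) :
    (u ∈ Set.range (algebraMap R F)) ∧ (v ∈ Set.range (algebraMap R F)) := by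
  obtain ⟨g, gmonic, hg⟩ := hint
  set p : F[X] := X^2 - C u * X + C v with hp
  have hpform : p = X^2 + (C (-u) * X + C v) := by rw [hp, map_neg]; ring
  have pmonic : p.Monic := by
    rw [hpform]
    exact Polynomial.monic_X_pow_add (n := 2)
      (lt_of_le_of_lt Polynomial.degree_linear_le (by norm_num))
  have pdeg : p.degree = 2 := by
    have : p = C 1 * X^2 + C (-u) * X + C v := by rw [hp, map_one, map_neg]; ring
    rw [this]
    exact Polynomial.degree_quadratic one_ne_zero
  have paeval : Polynomial.aeval β p = 0 := by
    rw [hp]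
    simp only [map_add, map_sub, map_mul, map_pow, Polynomial.aeval_X, Polynomial.aeval_C]
    exact hq
  set gF : F[X] := g.map (algebraMap R F) with hgF
  have hgFaeval : Polynomial.aeval β gF = 0 := by
    rw [hgF, Polynomial.aeval_map_algebraMap]
    rw [Polynomial.aeval_def]
    exact hg
  have hmod : gF %ₘ p = gF - p * (gF /ₘ p) := Polynomial.modByMonic_eq_sub_mul_div _ p
  have hraeval : Polynomial.aeval β (gF %ₘ p) = 0 := by
    rw [hmod, map_sub, map_mul, paeval, zero_mul, sub_zero, hgFaeval]
  have hrdeg : (gF %ₘ p).degree ≤ 1 := by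
    have := Polynomial.degree_modByMonic_lt gF pmonic
    rw [pdeg] at this
    exact Order.le_of_lt_succ (by exact_mod_cast this)
  have hrform := Polynomial.eq_X_add_C_of_degree_le_one hrdeg
  set c := (gF %ₘ p).coeff 1
  set d := (gF %ₘ p).coeff 0
  have hcd : algebraMap F B c * β + algebraMap F B d = 0 := by
    have := hraeval
    rw [hrform] at this
    simpa using this
  have hc : c = 0 := by
    by_contra hcne
    apply hnr
    refine ⟨c⁻¹ * (-d), ?_⟩
    have h5 : algebraMap F B c * β = algebraMap F B (-d) := by
      rw [map_neg]; exact eq_neg_of_add_eq_zero_left hcd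
    rw [map_mul, ← h5, ← mul_assoc, ← map_mul, inv_mul_cancel₀ hcne, map_one, one_mul]
  have hd : d = 0 := by
    have : algebraMap F B d = 0 := by rw [← hcd, hc, map_zero, zero_mul, zero_add]
    exact (map_eq_zero_iff _ (RingHom.injective _)).mp this
  have hr0 : gF %ₘ p = 0 := by rw [hrform, hc, hd]; simp
  have hdvd : p ∣ gF := (Polynomial.modByMonic_eq_zero_iff_dvd pmonic).mp hr0
  obtain ⟨g', hg'⟩ := IsIntegrallyClosed.eq_map_mul_C_of_dvd F gmonic hdvd
  rw [pmonic.leadingCoeff, map_one, mul_one] at hg'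
  constructor
  · refine ⟨-(g'.coeff 1), ?_⟩
    have := congrArg (fun q => Polynomial.coeff q 1) hg'
    simp only [Polynomial.coeff_map] at this
    rw [map_neg, this]
    rw [hp]
    simp [Polynomial.coeff_X_pow]
  · refine ⟨g'.coeff 0, ?_⟩
    have := congrArg (fun q => Polynomial.coeff q 0) hg'
    simp only [Polynomial.coeff_map] at this
    rw [this, hp]
    simp
end Quad

/-! ### Denominator descent over a DVR -/

section Descent
variable {R F : Type*} [CommRing R] [IsDomain R] [IsDiscreteValuationRing R]
    [Field F] [Algebra R F] [IsFractionRing R F] {π : R}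

private lemma qa_exists_pow_mul_mem (hπ : Irreducible π) (a : F) :
    ∃ k : ℕ, algebraMap R F (π^k) * a ∈ Set.range (algebraMap R F) := by
  obtain ⟨⟨x, s⟩, hs⟩ := IsLocalization.surj (nonZeroDivisors R) a
  simp only at hs
  have hs0 : (s : R) ≠ 0 := nonZeroDivisors.ne_zero s.2
  obtain ⟨m, u, hu⟩ := IsDiscreteValuationRing.eq_unit_mul_pow_irreducible hs0 hπ
  refine ⟨m, (↑u⁻¹ : R) * x, ?_⟩
  have h1 : a * (algebraMap R F ↑u * algebraMap R F (π^m)) = algebraMap R F x := by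
    rw [← map_mul, ← hu]; exact hs
  have h2 : algebraMap R F ↑u * algebraMap R F ↑u⁻¹ = 1 := by
    rw [← map_mul, Units.mul_inv, map_one]
  calc algebraMap R F ((↑u⁻¹ : R) * x)
      = algebraMap R F ↑u⁻¹ * (a * (algebraMap R F ↑u * algebraMap R F (π^m))) := by
        rw [h1, map_mul, mul_comm]
    _ = (algebraMap R F ↑u * algebraMap R F ↑u⁻¹) * (algebraMap R F (π^m) * a) := by ring
    _ = algebraMap R F (π^m) * a := by rw [h2, one_mul]

private lemma qa_pow_mul_mem_pad {a : F} {k : ℕ} (j : ℕ)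
    (h : algebraMap R F (π^k) * a ∈ Set.range (algebraMap R F)) :
    algebraMap R F (π^(k+j)) * a ∈ Set.range (algebraMap R F) := by
  obtain ⟨A, hA⟩ := h
  exact ⟨π^j * A, by rw [map_mul, hA, pow_add, map_mul]; ring⟩

private lemma qa_descent (hπ : Irreducible π) (t' n' : R)
    (Hdiv : ∀ A₁ B₁ : R, π^2 ∣ A₁^2 + A₁*B₁*t' + B₁^2*n' → π ∣ 2*A₁ + B₁*t' →
      π ∣ A₁ ∧ π ∣ B₁)
    (k : ℕ) :
    ∀ a b : F,
    2*a + b * algebraMap R F t' ∈ Set.range (algebraMap R F) →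
    a^2 + a*b*algebraMap R F t' + b^2 * algebraMap R F n' ∈ Set.range (algebraMap R F) →
    algebraMap R F (π^k) * a ∈ Set.range (algebraMap R F) →
    algebraMap R F (π^k) * b ∈ Set.range (algebraMap R F) →
    a ∈ Set.range (algebraMap R F) ∧ b ∈ Set.range (algebraMap R F) := by
  have injF : Function.Injective (algebraMap R F) := IsFractionRing.injective R F
  have hπF : algebraMap R F π ≠ 0 := fun h => hπ.ne_zero (injF (by rw [h, map_zero]))
  induction k with
  | zero => intro a b _ _ ha hb; simp only [pow_zero, map_one, one_mul] at ha hb; exact ⟨ha, hb⟩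
  | succ k ih =>
    intro a b hu hv ha hb
    obtain ⟨A, hA⟩ := ha
    obtain ⟨Bb, hB⟩ := hb
    obtain ⟨u, hU⟩ := hu
    obtain ⟨v, hV⟩ := hv
    have key1 : A^2 + A*Bb*t' + Bb^2*n' = π^2 * (π^(2*k) * v) := by
      apply injF
      simp only [map_add, map_mul, map_pow, hA, hB, hV]
      ring
    have key2 : 2*A + Bb*t' = π * (π^k * u) := by
      apply injF
      simp only [map_add, map_mul, map_pow, map_ofNat, hA, hB, hU]
      ring
    obtain ⟨hdA, hdB⟩ := Hdiv A Bb ⟨π^(2*k) * v, key1⟩ ⟨π^k * u, key2⟩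
    obtain ⟨A₁, rfl⟩ := hdA
    obtain ⟨B₁, rfl⟩ := hdB
    refine ih a b ⟨u, hU⟩ ⟨v, hV⟩ ⟨A₁, ?_⟩ ⟨B₁, ?_⟩
    · exact mul_left_cancel₀ hπF (by rw [← map_mul, hA, pow_succ', map_mul, mul_assoc])
    · exact mul_left_cancel₀ hπF (by rw [← map_mul, hB, pow_succ', map_mul, mul_assoc])
end Descent

section Basic
variable {R F B : Type*} [CommRing R] [IsDomain R] [IsDiscreteValuationRing R]
    [Field F] [Algebra R F] [IsFractionRing R F]
    [Ring B] [Nontrivial B] [Algebra F B] [Algebra R B] [IsScalarTower R F B]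

private lemma qa_mk_basic {π : R} (hπ : Irreducible π)
    (O : Subalgebra R B) (β₀ : B) (hβO : β₀ ∈ O)
    (hnr : β₀ ∉ Set.range (algebraMap F B))
    (t' n' : R)
    (hrel : β₀^2 - algebraMap R B t' * β₀ + algebraMap R B n' = 0)
    (Hdiv : ∀ A₁ B₁ : R, π^2 ∣ A₁^2 + A₁*B₁*t' + B₁^2*n' → π ∣ 2*A₁ + B₁*t' →
      π ∣ A₁ ∧ π ∣ B₁) :
    IsBasicOrder R F B O := by
  have injF : Function.Injective (algebraMap R F) := IsFractionRing.injective R F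
  have injFB : Function.Injective (algebraMap F B) := RingHom.injective _
  have injRB : Function.Injective (algebraMap R B) := by
    rw [IsScalarTower.algebraMap_eq R F B]
    exact injFB.comp injF
  set sp : Submodule R B := Submodule.span R {(1:B), β₀} with hsp
  have one_mem : (1:B) ∈ sp := Submodule.subset_span (Set.mem_insert _ _)
  have hβsp : β₀ ∈ sp := Submodule.subset_span (Set.mem_insert_of_mem _ rfl)
  have hrepR : ∀ a b : R, Polynomial.aeval β₀ (C a + C b * X : R[X]) = a • (1:B) + b • β₀ := by
    intro a b
    simp only [map_add, map_mul, aeval_C, aeval_X]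
    rw [Algebra.algebraMap_eq_smul_one, ← Algebra.smul_def]
  have haevR : Polynomial.aeval β₀ (X^2 - C t' * X + C n' : R[X]) = 0 := by
    simp only [map_add, map_sub, map_mul, map_pow, aeval_X, aeval_C]
    exact hrel
  have hmul : ∀ (x y : B), x ∈ sp → y ∈ sp → x * y ∈ sp := by
    intro x y hx hy
    obtain ⟨a, b, hab⟩ := Submodule.mem_span_pair.mp hx
    obtain ⟨c, d, hcd⟩ := Submodule.mem_span_pair.mp hy
    have pid : (C a + C b * X) * (C c + C d * X) =
        (C (a*c - b*d*n') + C (a*d + b*c + b*d*t') * X) + C (b*d) * (X^2 - C t' * X + C n') := by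
      simp only [map_sub, map_add, map_mul]
      ring
    have hx' : x = Polynomial.aeval β₀ (C a + C b * X : R[X]) := by rw [hrepR, hab]
    have hy' : y = Polynomial.aeval β₀ (C c + C d * X : R[X]) := by rw [hrepR, hcd]
    have : x * y = (a*c - b*d*n') • (1:B) + (a*d + b*c + b*d*t') • β₀ := by
      rw [hx', hy', ← map_mul, pid, map_add, map_mul, haevR, mul_zero, add_zero, hrepR]
    rw [this]
    exact Submodule.add_mem _ (Submodule.smul_mem _ _ one_mem) (Submodule.smul_mem _ _ hβsp)
  set S : Subalgebra R B := sp.toSubalgebra one_mem hmul with hS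
  have hmemS : ∀ x : B, x ∈ S ↔ x ∈ sp := fun x => Iff.rfl
  have hSO : S ≤ O := by
    intro x hx
    have : sp ≤ Subalgebra.toSubmodule O := by
      rw [hsp, Submodule.span_le]
      rintro z (rfl | rfl)
      · exact O.one_mem
      · exact hβO
    exact this hx
  have hcomm : ∀ x ∈ S, ∀ y ∈ S, x * y = y * x := by
    intro x hx y hy
    obtain ⟨a, b, hab⟩ := Submodule.mem_span_pair.mp ((hmemS x).mp hx)
    obtain ⟨c, d, hcd⟩ := Submodule.mem_span_pair.mp ((hmemS y).mp hy)
    have hx' : x = Polynomial.aeval β₀ (C a + C b * X : R[X]) := by rw [hrepR, hab]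
    have hy' : y = Polynomial.aeval β₀ (C c + C d * X : R[X]) := by rw [hrepR, hcd]
    rw [hx', hy', ← map_mul, ← map_mul, mul_comm]
  have hli : ∀ s t : R, s • (1:B) + t • β₀ = 0 → s = 0 ∧ t = 0 := by
    intro s t hst
    have ht : t = 0 := by
      by_contra htne
      apply hnr
      have h1 : algebraMap R B s + algebraMap R B t * β₀ = 0 := by
        rw [Algebra.smul_def, Algebra.smul_def, mul_one] at hst
        exact hst
      have htF : algebraMap R F t ≠ 0 := fun h => htne (injF (by rw [h, map_zero]))
      refine ⟨(algebraMap R F t)⁻¹ * (-(algebraMap R F s)), ?_⟩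
      have h2 : algebraMap R B t * β₀ = algebraMap F B (-(algebraMap R F s)) := by
        rw [map_neg, ← IsScalarTower.algebraMap_apply]
        exact eq_neg_of_add_eq_zero_right h1
      rw [map_mul, ← h2, IsScalarTower.algebraMap_apply R F B, ← mul_assoc, ← map_mul,
        inv_mul_cancel₀ htF, map_one, one_mul]
    subst ht
    have hs : algebraMap R B s = 0 := by
      rw [zero_smul, add_zero, Algebra.smul_def, mul_one] at hst
      exact hst
    exact ⟨injRB (by rw [hs, map_zero]), rfl⟩
  set e₀ : S := ⟨(1:B), one_mem⟩ with he₀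
  set e₁ : S := ⟨β₀, hβsp⟩ with he₁
  have hliS : LinearIndependent R ![e₀, e₁] := by
    rw [LinearIndependent.pair_iff]
    intro s t hst
    have : s • (1:B) + t • β₀ = 0 := by
      have := congrArg (Subtype.val) hst
      simpa using this
    exact hli s t this
  have hspanS : ⊤ ≤ Submodule.span R (Set.range ![e₀, e₁]) := by
    have hrange : Set.range ![e₀, e₁] = {e₀, e₁} := by
      ext z
      simp [Matrix.range_cons, Matrix.range_empty]
      tauto
    rw [hrange]
    rintro ⟨x, hx⟩ -
    obtain ⟨a, b, hab⟩ := Submodule.mem_span_pair.mp hx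
    refine Submodule.mem_span_pair.mpr ⟨a, b, ?_⟩
    apply Subtype.ext
    simpa using hab
  let bas : Module.Basis (Fin 2) R S := Module.Basis.mk hliS hspanS
  have hfree : Module.Free R S := Module.Free.of_basis bas
  have hrank : Module.finrank R S = 2 := by
    rw [Module.finrank_eq_card_basis bas, Fintype.card_fin]
  have hclosed : ∀ β ∈ Submodule.span F (S : Set B), IsIntegral R β → β ∈ S := by
    intro β hβspan hint
    have hspan2 : Submodule.span F (S : Set B) = Submodule.span F {(1:B), β₀} := by
      show Submodule.span F (sp : Set B) = _
      rw [hsp, Submodule.span_span_of_tower]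
    rw [hspan2] at hβspan
    obtain ⟨a, b, hab⟩ := Submodule.mem_span_pair.mp hβspan
    by_cases hrng : β ∈ Set.range (algebraMap F B)
    · obtain ⟨c, hc⟩ := hrng
      obtain ⟨r, hr⟩ := qa_scalar_integral (B := B) (by rw [hc]; exact hint)
      have : β = r • (1:B) := by
        rw [← hc, ← hr, ← IsScalarTower.algebraMap_apply, Algebra.algebraMap_eq_smul_one]
      rw [hmemS, this]
      exact Submodule.smul_mem _ _ one_mem
    · set t : F := algebraMap R F t' with hter
      set n : F := algebraMap R F n' with hner
      have hβrep : β = Polynomial.aeval β₀ (C a + C b * X : F[X]) := by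
        simp only [map_add, map_mul, aeval_C, aeval_X]
        rw [Algebra.algebraMap_eq_smul_one, ← Algebra.smul_def, hab]
      have haevF : Polynomial.aeval β₀ (X^2 - C t * X + C n : F[X]) = 0 := by
        simp only [map_add, map_sub, map_mul, map_pow, aeval_X, aeval_C]
        rw [hter, hner, ← IsScalarTower.algebraMap_apply, ← IsScalarTower.algebraMap_apply]
        exact hrel
      have pid2 : (C a + C b * X)^2 - C (2*a+b*t) * (C a + C b*X) + C (a^2+a*b*t+b^2*n)
          = C (b^2) * (X^2 - C t * X + C n) := by
        simp only [map_sub, map_add, map_mul, map_pow, map_ofNat]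
        ring
      have hq1 : β^2 - algebraMap F B (2*a+b*t) * β + algebraMap F B (a^2+a*b*t+b^2*n) = 0 := by
        have := congrArg (Polynomial.aeval β₀) pid2
        rw [map_mul, haevF, mul_zero, map_add, map_sub, map_mul, map_pow, aeval_C, aeval_C,
          ← hβrep] at this
        exact this
      obtain ⟨hu, hv⟩ := qa_quad_coeff_integral hint hrng hq1
      obtain ⟨ka, hka⟩ := qa_exists_pow_mul_mem hπ (F := F) a
      obtain ⟨kb, hkb⟩ := qa_exists_pow_mul_mem hπ (F := F) b
      have hka' := qa_pow_mul_mem_pad (π := π) kb hka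
      have hkb' := qa_pow_mul_mem_pad (π := π) ka hkb
      rw [add_comm kb ka] at hkb'
      obtain ⟨⟨A, hA⟩, ⟨Bb, hB⟩⟩ := qa_descent hπ t' n' Hdiv (ka + kb) a b hu hv hka' hkb'
      rw [hmemS, ← hab, ← hA, ← hB, algebraMap_smul, algebraMap_smul]
      exact Submodule.add_mem _ (Submodule.smul_mem _ _ one_mem) (Submodule.smul_mem _ _ hβsp)
  exact ⟨S, hSO, hcomm, hfree, hrank, hclosed⟩
end Basic

/-- if `O` is a quaternion order over a DVR that is a local ring and is not
basic, then every `α ∈ rad O` satisfies `π² ∣ nrd α` and `α² ∈ p·(rad O)`. -/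
theorem stmt_4 (R F B : Type*) [CommRing R] [IsDomain R] [IsDiscreteValuationRing R]
    [Field F] [Algebra R F] [IsFractionRing R F]
    [Ring B] [Algebra F B] [Algebra R B] [IsScalarTower R F B]
    [Algebra.IsCentral F B] [IsSimpleRing B] (hB : Module.finrank F B = 4)
    (π : R) (hπ : Irreducible π)
    (trd : B →ₗ[F] F) (nrd : B → F)
    (hchar : ∀ α : B, α ^ 2 - algebraMap F B (trd α) * α + algebraMap F B (nrd α) = 0)
    (htrd1 : trd 1 = 2)
    (O : Subalgebra R B) (hO : IsQuaternionOrder R F B O)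
    (hloc : IsLocalRing O)
    (hnotbasic : ¬ IsBasicOrder R F B O)
    (α : O) (hα : α ∈ Ideal.jacobson (⊥ : Ideal O)) :
    (∃ s : R, nrd (α : B) = algebraMap R F (π ^ 2 * s)) ∧
    (α : B) ^ 2 ∈ (Ideal.span {π} : Ideal R) •
      ((Ideal.jacobson (⊥ : Ideal O)).restrictScalars R).map
        (Subalgebra.val O).toLinearMap := by
  have hBnt : Nontrivial B := Module.nontrivial_of_finrank_pos (R := F)
    (by rw [hB]; norm_num)
  have injF : Function.Injective (algebraMap R F) := IsFractionRing.injective R F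
  have injFB : Function.Injective (algebraMap F B) := RingHom.injective _
  have hprime : Prime π := hπ.prime
  -- every element of O is integral over R
  have hfin : Module.Finite R O := hO.1
  have hOint : Algebra.IsIntegral R O := Algebra.IsIntegral.of_finite R O
  have hint : IsIntegral R (α : B) := (Algebra.IsIntegral.isIntegral (R := R) α).map O.val
  -- the image-of-jacobson submodule
  set M : Submodule R B := ((Ideal.jacobson (⊥ : Ideal O)).restrictScalars R).map
    (Subalgebra.val O).toLinearMap with hM
  have hπspan : π ∈ (Ideal.span {π} : Ideal R) := Ideal.mem_span_singleton_self π
  have hMval : ∀ x : O, x ∈ Ideal.jacobson (⊥ : Ideal O) → (x : B) ∈ M := by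
    intro x hx
    exact Submodule.mem_map_of_mem hx
  -- divisibility from jacobson membership of scalars
  have hjacdvd : ∀ r : R, algebraMap R O r ∈ Ideal.jacobson (⊥ : Ideal O) → π ∣ r := by
    intro r hr
    by_contra hndvd
    have hrunit : IsUnit r := by
      by_contra hnu
      apply hndvd
      have : r ∈ IsLocalRing.maximalIdeal R := hnu
      rw [(IsDiscreteValuationRing.irreducible_iff_uniformizer π).mp hπ] at this
      exact Ideal.mem_span_singleton.mp this
    exact qa_jac_ne_top (Ideal.eq_top_of_isUnit_mem _ hr (hrunit.map (algebraMap R O)))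
  by_cases hrng : (α : B) ∈ Set.range (algebraMap F B)
  · -- scalar case
    obtain ⟨c, hc⟩ := hrng
    obtain ⟨r, hr⟩ := qa_scalar_integral (B := B) (by rw [hc]; exact hint)
    have hval : (α : B) = algebraMap R B r := by
      rw [← hc, ← hr, ← IsScalarTower.algebraMap_apply]
    have hαeq : α = algebraMap R O r := by
      apply Subtype.coe_injective
      exact hval
    have hdr : π ∣ r := hjacdvd r (hαeq ▸ hα)
    obtain ⟨r₁, rfl⟩ := hdr
    -- compute nrd
    have htrdc : trd (α : B) = 2 * c := by
      rw [← hc, Algebra.algebraMap_eq_smul_one, map_smul, htrd1, smul_eq_mul, mul_comm]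
    have hnrdc : nrd (α : B) = c^2 := by
      rw [← hc]
      have h0 := hchar (algebraMap F B c)
      have htr : trd (algebraMap F B c) = 2*c := by rw [hc]; exact htrdc
      rw [htr, ← map_pow, ← map_mul, ← map_sub, ← map_add] at h0
      have h1 : c^2 - 2*c*c + nrd (algebraMap F B c) = 0 := by
        apply injFB; rw [map_zero]; exact h0
      linear_combination h1
    constructor
    · refine ⟨r₁^2, ?_⟩
      rw [hnrdc, ← hr, ← map_pow]
      congr 1
      ring
    · have hξ : algebraMap R O r₁ * α ∈ Ideal.jacobson (⊥ : Ideal O) :=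
        Ideal.mul_mem_left _ _ hα
      have hsq : (α : B)^2 = π • ((algebraMap R O r₁ * α : O) : B) := by
        have e1 : ((algebraMap R O r₁ * α : O) : B) = algebraMap R B r₁ * (α : B) := by
          push_cast; rfl
        rw [e1, hval, Algebra.smul_def, ← map_pow, ← map_mul, ← map_mul]
        exact congrArg (algebraMap R B) (by ring)
      rw [hsq]
      exact Submodule.smul_mem_smul hπspan (hMval _ hξ)
  · -- non-scalar case
    obtain ⟨⟨t', ht'⟩, ⟨n', hn'⟩⟩ := qa_quad_coeff_integral hint hrng (hchar (α : B))
    have hrelB : (α : B)^2 - algebraMap R B t' * (α : B) + algebraMap R B n' = 0 := by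
      rw [IsScalarTower.algebraMap_apply R F B, IsScalarTower.algebraMap_apply R F B, ht', hn']
      exact hchar (α : B)
    -- n' is in the jacobson radical (as a scalar of O)
    have hγ : algebraMap R O n' = algebraMap R O t' * α - α * α := by
      apply Subtype.coe_injective
      push_cast
      linear_combination (norm := noncomm_ring) hrelB
    have hn'J : algebraMap R O n' ∈ Ideal.jacobson (⊥ : Ideal O) := by
      rw [hγ]
      exact Submodule.sub_mem _ (Ideal.mul_mem_left _ _ hα) (Ideal.mul_mem_left _ _ hα)
    have hdn : π ∣ n' := hjacdvd n' hn'J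
    -- π divides t'
    have hdt : π ∣ t' := by
      by_contra hndt
      apply hnotbasic
      refine qa_mk_basic hπ O (α : B) α.2 hrng t' n' hrelB ?_
      intro A₁ B₁ h2 h1
      have hπsum : π ∣ A₁^2 + A₁*B₁*t' + B₁^2*n' := dvd_trans (dvd_pow_self π two_ne_zero) h2
      have hπA2 : π ∣ A₁ * (A₁ + B₁*t') := by
        have : A₁ * (A₁ + B₁*t') = (A₁^2 + A₁*B₁*t' + B₁^2*n') - B₁^2*n' := by ring
        rw [this]
        exact dvd_sub hπsum (Dvd.dvd.mul_left hdn _)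
      have hdA : π ∣ A₁ := by
        rcases hprime.dvd_mul.mp hπA2 with h | h
        · exact h
        · have : A₁ = (2*A₁ + B₁*t') - (A₁ + B₁*t') := by ring
          rw [this]
          exact dvd_sub h1 h
      refine ⟨hdA, ?_⟩
      have hπBt : π ∣ B₁ * t' := by
        have : B₁ * t' = (2*A₁ + B₁*t') - 2*A₁ := by ring
        rw [this]
        exact dvd_sub h1 (Dvd.dvd.mul_left hdA 2)
      rcases hprime.dvd_mul.mp hπBt with h | h
      · exact h
      · exact absurd h hndt
    obtain ⟨t₁, rfl⟩ := hdt
    obtain ⟨n₁, rfl⟩ := hdn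
    -- π divides n₁
    have hdn₁ : π ∣ n₁ := by
      by_contra hndn₁
      apply hnotbasic
      refine qa_mk_basic hπ O (α : B) α.2 hrng (π*t₁) (π*n₁) hrelB ?_
      intro A₁ B₁ h2 _
      have hπA : π ∣ A₁ := by
        apply hprime.dvd_of_dvd_pow (n := 2)
        have : A₁^2 = (A₁^2 + A₁*B₁*(π*t₁) + B₁^2*(π*n₁)) - π * (A₁*B₁*t₁ + B₁^2*n₁) := by ring
        rw [this]
        exact dvd_sub (dvd_trans (dvd_pow_self π two_ne_zero) h2) (Dvd.dvd.mul_right dvd_rfl _)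
      refine ⟨hπA, ?_⟩
      obtain ⟨A₂, rfl⟩ := hπA
      have hπ2 : π^2 ∣ π * (B₁^2 * n₁) := by
        have : π * (B₁^2 * n₁) = ((π*A₂)^2 + (π*A₂)*B₁*(π*t₁) + B₁^2*(π*n₁))
            - π^2 * (A₂^2 + A₂*B₁*t₁) := by ring
        rw [this]
        exact dvd_sub h2 (Dvd.dvd.mul_right dvd_rfl _)
      have hπB2 : π ∣ B₁^2 * n₁ := by
        rcases hπ2 with ⟨w, hw⟩
        refine ⟨w, mul_left_cancel₀ hπ.ne_zero ?_⟩
        rw [hw]; ring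
      rcases hprime.dvd_mul.mp hπB2 with h | h
      · exact hprime.dvd_of_dvd_pow h
      · exact absurd h hndn₁
    obtain ⟨s, rfl⟩ := hdn₁
    constructor
    · refine ⟨s, ?_⟩
      rw [← hn']
      congr 1
      ring
    · -- α² = π•(t₁•α) − π•(π•s•1)
      have hξJ : algebraMap R O (π * s) ∈ Ideal.jacobson (⊥ : Ideal O) := by
        apply qa_mem_jac_of_sq
        have : algebraMap R O (π * s) * algebraMap R O (π * s)
            = algebraMap R O s * algebraMap R O (π * (π * s)) := by
          rw [← map_mul, ← map_mul]
          congr 1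
          ring
        rw [this]
        exact Ideal.mul_mem_left _ _ hn'J
      have hζJ : algebraMap R O t₁ * α ∈ Ideal.jacobson (⊥ : Ideal O) :=
        Ideal.mul_mem_left _ _ hα
      have hsq : (α : B)^2 = π • ((algebraMap R O t₁ * α : O) : B)
          - π • ((algebraMap R O (π * s) : O) : B) := by
        have hrel2 : (α : B)^2 = algebraMap R B (π*t₁) * (α : B) - algebraMap R B (π*(π*s)) := by
          linear_combination (norm := noncomm_ring) hrelB
        have e1 : ((algebraMap R O t₁ * α : O) : B) = algebraMap R B t₁ * (α : B) := by
          push_cast; rfl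
        have e2 : ((algebraMap R O (π * s) : O) : B) = algebraMap R B (π*s) := by
          push_cast; rfl
        rw [e1, e2, Algebra.smul_def, Algebra.smul_def, ← mul_assoc, ← map_mul, ← map_mul]
        exact hrel2
      rw [hsq]
      exact Submodule.sub_mem _ (Submodule.smul_mem_smul hπspan (hMval _ hζJ))
        (Submodule.smul_mem_smul hπspan (hMval _ hξJ))
end

section
/- Let R be a DVR with fraction field F, B a quaternion algebra over F, and O ⊆ B an R-order that is basic, i.e., contains a maximal quadratic R-order S that is a local ring. Then every O-ideal (full R-lattice I ⊆ B that is a left O-module, respectively right O-module) is generated by two elements as a left (respectively right) O-ideal. -/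
open Polynomial Submodule

section Aux
variable {R F B : Type*} [CommRing R] [IsDomain R] [Field F] [Algebra R F] [IsFractionRing R F]
  [Ring B] [Algebra F B] [Algebra R B] [IsScalarTower R F B]

lemma aux_den (S : Subalgebra R B) {k : B} (hk : k ∈ Submodule.span F (S : Set B)) :
    ∃ r : R, r ≠ 0 ∧ r • k ∈ S := by
  induction hk using Submodule.span_induction with
  | mem x hx => exact ⟨1, one_ne_zero, by simpa using hx⟩
  | zero => exact ⟨1, one_ne_zero, by simpa using S.zero_mem⟩
  | add x y _ _ hx hy =>
      obtain ⟨r, hr, hrx⟩ := hx; obtain ⟨t, ht, hty⟩ := hy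
      refine ⟨r * t, mul_ne_zero hr ht, ?_⟩
      rw [smul_add]
      have h1 : (r*t) • x = t • (r • x) := by rw [mul_comm, mul_smul]
      have h2 : (r*t) • y = r • (t • y) := mul_smul r t y
      rw [h1, h2]
      exact S.add_mem (S.smul_mem hrx t) (S.smul_mem hty r)
  | smul f x _ ih =>
      obtain ⟨r, hr, hrx⟩ := ih
      obtain ⟨⟨a, b⟩, hab⟩ := IsLocalization.surj (nonZeroDivisors R) f
      refine ⟨b * r, mul_ne_zero (nonZeroDivisors.ne_zero b.2) hr, ?_⟩
      have key : ((b : R) * r) • (f • x) = a • (r • x) := by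
        rw [mul_smul, smul_comm r f x, ← smul_assoc,
          show (b : R) • f = algebraMap R F a from by rw [Algebra.smul_def, mul_comm, hab],
          algebraMap_smul]
      rw [key]
      exact S.smul_mem hrx a
end Aux

section Aux2
variable {R F B : Type*} [CommRing R] [IsDomain R] [Field F] [Algebra R F] [IsFractionRing R F]
  [Ring B] [Algebra F B] [Algebra R B] [IsScalarTower R F B]

lemma aux_e (S : Subalgebra R B) [Module.Free R S] [Module.Finite R S]
    (hSrank : Module.finrank R S = 2) :
    ∃ e : Fin 2 → B, (∀ i, e i ∈ S) ∧ LinearIndependent F e ∧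
      Submodule.span F (Set.range e) = Submodule.span F (S : Set B) := by
  classical
  have b0 := Module.Free.chooseBasis R (↥S)
  have hcard : Fintype.card (Module.Free.ChooseBasisIndex R ↥S) = 2 := by
    rw [← Module.finrank_eq_card_chooseBasisIndex, hSrank]
  let c := b0.reindex (Fintype.equivFinOfCardEq hcard)
  refine ⟨fun i => (c i : B), fun i => (c i).2, ?_, ?_⟩
  · have hR : LinearIndependent R (fun i => ((c i : ↥S) : B)) :=
      c.linearIndependent.map' (Subalgebra.toSubmodule S).subtype (Submodule.ker_subtype _)
    exact LinearIndependent.localization (Rₛ := F) (S := nonZeroDivisors R) hR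
  · apply le_antisymm
    · exact Submodule.span_mono (Set.range_subset_iff.mpr fun i => (c i).2)
    · rw [Submodule.span_le]
      intro s hs
      have h1 : s ∈ Submodule.span R (Set.range fun i => ((c i : ↥S) : B)) := by
        have : Set.range (fun i => ((c i : ↥S) : B)) =
            (Subalgebra.toSubmodule S).subtype '' Set.range c := by
          rw [← Set.range_comp]; rfl
        rw [this, ← Submodule.map_span, c.span_eq, Submodule.map_top, Submodule.range_subtype]
        exact hs
      exact Submodule.span_le_restrictScalars R F _ h1
end Aux2
section Aux3
variable {R F B : Type*} [CommRing R] [IsDomain R] [IsDiscreteValuationRing R]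
  [Field F] [Algebra R F] [IsFractionRing R F]
  [Ring B] [Algebra F B] [Algebra R B] [IsScalarTower R F B] [Nontrivial B]

-- if x in Kspan has x^2 = 0 and x ≠ 0, contradiction
lemma aux_sq_zero (S : Subalgebra R B) [Module.Finite R S]
    (hSmax : ∀ β ∈ Submodule.span F (S : Set B), IsIntegral R β → β ∈ S)
    {x : B} (hx : x ∈ Submodule.span F (S : Set B)) (hx0 : x ≠ 0) (hx2 : x * x = 0) :
    False := by
  have hall : ∀ f : F, f • x ∈ S := by
    intro f
    refine hSmax _ (Submodule.smul_mem _ _ hx) ⟨X ^ 2, monic_X_pow 2, ?_⟩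
    rw [eval₂_X_pow, pow_two, smul_mul_assoc, mul_smul_comm, hx2, smul_zero, smul_zero]
  let φ : F →ₗ[R] S :=
    { toFun := fun f => ⟨f • x, hall f⟩
      map_add' := fun f g => by ext; simp [add_smul]
      map_smul' := fun r f => by ext; simp [smul_assoc] }
  have hinj : Function.Injective φ := by
    intro f g hfg
    have : f • x = g • x := congrArg Subtype.val hfg
    by_contra hne
    have : (f - g) • x = 0 := by rw [sub_smul, this, sub_self]
    rcases smul_eq_zero.mp this with h | h
    · exact hne (sub_eq_zero.mp h)
    · exact hx0 h
  have hS : IsNoetherian R S := inferInstance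
  have hNF : IsNoetherian R F := isNoetherian_of_injective φ hinj
  have hMF : Module.Finite R F := ⟨IsNoetherian.noetherian ⊤⟩
  have hint : Algebra.IsIntegral R F := Algebra.IsIntegral.of_finite R F
  have hsurj : ∀ f : F, ∃ r : R, algebraMap R F r = f := by
    intro f
    exact IsIntegrallyClosed.isIntegral_iff.mp (hint.isIntegral f)
  have hfield : IsField R := by
    refine ⟨exists_pair_ne R, mul_comm, ?_⟩
    intro a ha
    obtain ⟨r, hr⟩ := hsurj (algebraMap R F a)⁻¹
    refine ⟨r, (IsFractionRing.injective R F) ?_⟩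
    rw [map_mul, hr, map_one, mul_inv_cancel₀]
    exact fun h => ha ((IsFractionRing.injective R F) (by rw [h, map_zero]))
  exact IsDiscreteValuationRing.not_isField R hfield

lemma aux_nzd (S : Subalgebra R B) [Module.Free R S] [Module.Finite R S]
    (hSrank : Module.finrank R S = 2)
    (hSmax : ∀ β ∈ Submodule.span F (S : Set B), IsIntegral R β → β ∈ S)
    (hSloc : IsLocalRing S) :
    ∀ x ∈ Submodule.span F (S : Set B), ∀ y ∈ Submodule.span F (S : Set B),
      x * y = 0 → x = 0 ∨ y = 0 := by
  obtain ⟨e, heS, heLI, heSpan⟩ := aux_e (F := F) S hSrank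
  have hKfin : FiniteDimensional F (Submodule.span F (S : Set B)) := by
    rw [← heSpan]
    exact FiniteDimensional.span_of_finite F (Set.finite_range e)
  have hK2 : Module.finrank F (Submodule.span F (S : Set B)) = 2 := by
    rw [← heSpan, finrank_span_eq_card heLI, Fintype.card_fin]
  intro x hx y hy hxy
  by_cases hx0 : x = 0
  · exact Or.inl hx0
  right
  by_cases h1 : ∃ f : F, x = f • (1 : B)
  · obtain ⟨f, rfl⟩ := h1
    have hf : f ≠ 0 := fun h => hx0 (by rw [h, zero_smul])
    have : f • y = 0 := by simpa [smul_mul_assoc] using hxy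
    rcases smul_eq_zero.mp this with h | h
    · exact absurd h hf
    · exact h
  · -- 1, x are F-independent
    have hLI : LinearIndependent F ![(1 : B), x] := by
      rw [LinearIndependent.pair_iff]
      intro s t hst
      by_cases ht : t = 0
      · rw [ht, zero_smul, add_zero] at hst
        rcases smul_eq_zero.mp hst with h | h
        · exact ⟨h, ht⟩
        · exact absurd h one_ne_zero
      · exfalso
        apply h1
        refine ⟨t⁻¹ * -s, ?_⟩
        have h' : t • x = -(s • (1:B)) := by rw [eq_neg_iff_add_eq_zero, add_comm]; exact hst
        rw [mul_smul, neg_smul, ← h', ← mul_smul, inv_mul_cancel₀ ht, one_smul]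
    have hsub : Submodule.span F (Set.range ![(1 : B), x]) ≤ Submodule.span F (S : Set B) := by
      rw [Submodule.span_le]
      rintro z hz
      simp only [Matrix.range_cons, Matrix.range_empty, Set.union_empty, Set.union_singleton,
        Set.mem_insert_iff, Set.mem_singleton_iff] at hz
      rcases hz with rfl | rfl
      · exact hx
      · exact Submodule.subset_span S.one_mem
    have hspan : Submodule.span F (Set.range ![(1 : B), x]) = Submodule.span F (S : Set B) := by
      apply Submodule.eq_of_le_of_finrank_le hsub
      rw [hK2, finrank_span_eq_card hLI, Fintype.card_fin]
    have hy' : y ∈ Submodule.span F (Set.range ![(1 : B), x]) := by rw [hspan]; exact hy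
    have hy'' : ∃ a b : F, a • (1:B) + b • x = y := by
      rw [show Set.range ![(1 : B), x] = {1, x} by
        simp only [Matrix.range_cons, Matrix.range_empty, Set.union_empty,
          Set.union_singleton]
        exact Set.pair_comm x 1] at hy'
      exact Submodule.mem_span_pair.mp hy'
    obtain ⟨a, b, hab⟩ := hy''
    have hrel : a • x + b • (x * x) = 0 := by
      have := hxy
      rw [← hab, mul_add, mul_smul_comm, mul_one, mul_smul_comm] at this
      exact this
    by_cases hb : b = 0
    · rw [hb, zero_smul, add_zero] at hrel
      rcases smul_eq_zero.mp hrel with h | h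
      · rw [← hab, h, hb, zero_smul, zero_smul, add_zero]
      · exact absurd h hx0
    · have hxx : x * x = (b⁻¹ * -a) • x := by
        have h' : b • (x * x) = -(a • x) := by
          rw [eq_neg_iff_add_eq_zero, add_comm]; exact hrel
        rw [mul_smul, neg_smul, ← h', ← mul_smul, inv_mul_cancel₀ hb, one_smul]
      set c : F := b⁻¹ * -a with hc
      by_cases hc0 : c = 0
      · rw [hc0, zero_smul] at hxx
        exact absurd (aux_sq_zero S hSmax hx hx0 hxx) (fun h => h)
      · -- idempotent ei = c⁻¹ • x
        exfalso
        set ei : B := c⁻¹ • x with hei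
        have hee : ei * ei = ei := by
          rw [hei, smul_mul_assoc, mul_smul_comm, hxx, ← mul_smul, ← mul_smul, mul_assoc,
            inv_mul_cancel₀ hc0, mul_one]
        have hxc : x = c • ei := by rw [hei, ← mul_smul, mul_inv_cancel₀ hc0, one_smul]
        have heiK : ei ∈ Submodule.span F (S : Set B) := Submodule.smul_mem _ _ hx
        have heiS : ei ∈ S := by
          refine hSmax _ heiK ⟨X ^ 2 - X, monic_X_pow_sub (by simpa using degree_X_le), ?_⟩
          rw [eval₂_sub, eval₂_X_pow, eval₂_X, pow_two, hee, sub_self]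
        haveI := hSloc
        set es : S := ⟨ei, heiS⟩ with hes
        have hes2 : es * es = es := Subtype.ext hee
        rcases IsLocalRing.isUnit_or_isUnit_of_add_one
            (a := es) (b := 1 - es) (by noncomm_ring) with hu | hu
        · have hes1 : es = 1 := hu.mul_left_cancel (by rw [hes2, mul_one])
          have : ei = (1 : B) := congrArg Subtype.val hes1
          exact h1 ⟨c, by rw [hxc, this]⟩
        · have h0 : (1 - es) * es = (1 - es) * 0 := by
            rw [sub_mul, one_mul, hes2, sub_self, mul_zero]
          have hes0 : es = 0 := hu.mul_left_cancel h0
          have : ei = (0 : B) := congrArg Subtype.val hes0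
          exact hx0 (by rw [hxc, this, smul_zero])
end Aux3

section Aux4
variable {R F B : Type*} [CommRing R] [IsDomain R] [IsDiscreteValuationRing R]
  [Field F] [Algebra R F] [IsFractionRing R F]
  [Ring B] [Algebra F B] [Algebra R B] [IsScalarTower R F B] [Nontrivial B]

lemma aux_mul_mem (S : Subalgebra R B) {x y : B} (hx : x ∈ Submodule.span F (S : Set B))
    (hy : y ∈ Submodule.span F (S : Set B)) : x * y ∈ Submodule.span F (S : Set B) := by
  have h : Submodule.span F (S : Set B) * Submodule.span F (S : Set B) ≤
      Submodule.span F (S : Set B) := by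
    rw [Submodule.span_mul_span]
    apply Submodule.span_le.mpr
    rintro z hz
    rw [Set.mem_mul] at hz
    obtain ⟨a, ha, b, hb, rfl⟩ := hz
    exact Submodule.subset_span (S.mul_mem ha hb)
  exact h (Submodule.mul_mem_mul hx hy)

lemma aux_comm (S : Subalgebra R B) (hScomm : ∀ x ∈ S, ∀ y ∈ S, x * y = y * x) :
    ∀ x ∈ Submodule.span F (S : Set B), ∀ y ∈ Submodule.span F (S : Set B), x * y = y * x := by
  have step : ∀ y ∈ S, ∀ x ∈ Submodule.span F (S : Set B), x * y = y * x := by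
    intro y hy x hx
    induction hx using Submodule.span_induction with
    | mem a ha => exact hScomm a ha y hy
    | zero => rw [zero_mul, mul_zero]
    | add a b _ _ iha ihb => rw [add_mul, mul_add, iha, ihb]
    | smul f a _ ih => rw [smul_mul_assoc, mul_smul_comm, ih]
  intro x hx y hy
  induction hy using Submodule.span_induction with
  | mem a ha => exact step a ha x hx
  | zero => rw [zero_mul, mul_zero]
  | add a b _ _ iha ihb => rw [add_mul, mul_add, iha, ihb]
  | smul f a _ ih => rw [smul_mul_assoc, mul_smul_comm, ih]

/-- The quadratic `F`-algebra spanned by `S`. -/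
def auxK (S : Subalgebra R B) : Subalgebra F B :=
  (Submodule.span F (S : Set B)).toSubalgebra (Submodule.subset_span S.one_mem)
    (fun _ _ hx hy => aux_mul_mem S hx hy)

lemma mem_auxK {S : Subalgebra R B} {x : B} : x ∈ (auxK S : Subalgebra F B) ↔ x ∈ Submodule.span F (S : Set B) :=
  Iff.rfl

lemma aux_isField (S : Subalgebra R B) [Module.Free R S] [Module.Finite R S]
    [FiniteDimensional F B]
    (hSrank : Module.finrank R S = 2)
    (hSmax : ∀ β ∈ Submodule.span F (S : Set B), IsIntegral R β → β ∈ S)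
    (hSloc : IsLocalRing S)
    (hScomm : ∀ x ∈ S, ∀ y ∈ S, x * y = y * x) :
    IsField (auxK S : Subalgebra F B) := by
  haveI : Nontrivial (auxK S : Subalgebra F B) :=
    ⟨⟨1, (auxK S).one_mem⟩, ⟨0, (auxK S).zero_mem⟩, by
      intro h
      exact one_ne_zero (congrArg Subtype.val h)⟩
  refine ⟨exists_pair_ne _, ?_, ?_⟩
  · intro a b
    exact Subtype.ext (aux_comm S hScomm a.1 a.2 b.1 b.2)
  · intro z hz
    have hinj : Function.Injective (LinearMap.mulLeft F z) := by
      intro u v huv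
      have h0 : z * (u - v) = 0 := by
        have : z * u = z * v := huv
        rw [mul_sub, this, sub_self]
      rcases aux_nzd S hSrank hSmax hSloc z.1 ((mem_auxK (F := F)).mp z.2) (u - v).1
          ((mem_auxK (F := F)).mp (u - v).2) (congrArg Subtype.val h0) with h | h
      · exact absurd (Subtype.ext h) hz
      · exact sub_eq_zero.mp (Subtype.ext h : u - v = 0)
    obtain ⟨w, hw⟩ := LinearMap.surjective_of_injective hinj 1
    exact ⟨w, hw⟩
end Aux4

section Aux5
variable {R F B : Type*} [CommRing R] [IsDomain R] [IsDiscreteValuationRing R]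
  [Field F] [Algebra R F] [IsFractionRing R F]
  [Ring B] [Algebra F B] [Algebra R B] [IsScalarTower R F B] [Nontrivial B]

lemma aux_inv (S : Subalgebra R B) [Module.Free R S] [Module.Finite R S]
    [FiniteDimensional F B]
    (hSrank : Module.finrank R S = 2)
    (hSmax : ∀ β ∈ Submodule.span F (S : Set B), IsIntegral R β → β ∈ S)
    (hSloc : IsLocalRing S)
    (hScomm : ∀ x ∈ S, ∀ y ∈ S, x * y = y * x) :
    ∀ x ∈ Submodule.span F (S : Set B), x ≠ 0 →
      ∃ y ∈ Submodule.span F (S : Set B), x * y = 1 ∧ y * x = 1 := by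
  intro x hx hx0
  have hF := aux_isField S hSrank hSmax hSloc hScomm
  obtain ⟨w, hw⟩ := hF.mul_inv_cancel
    (a := ⟨x, (mem_auxK (F := F)).mpr hx⟩) (by
      intro h
      exact hx0 (congrArg Subtype.val h))
  refine ⟨w.1, (mem_auxK (F := F)).mp w.2, congrArg Subtype.val hw, ?_⟩
  rw [aux_comm S hScomm w.1 ((mem_auxK (F := F)).mp w.2) x hx]
  exact congrArg Subtype.val hw

lemma aux_pid (S : Subalgebra R B) [Module.Free R S] [Module.Finite R S]
    [FiniteDimensional F B]
    (hSrank : Module.finrank R S = 2)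
    (hSmax : ∀ β ∈ Submodule.span F (S : Set B), IsIntegral R β → β ∈ S)
    (hSloc : IsLocalRing S)
    (hScomm : ∀ x ∈ S, ∀ y ∈ S, x * y = y * x) :
    IsPrincipalIdealRing (S : Subalgebra R B) ∧ IsDomain (S : Subalgebra R B) := by
  letI : CommRing (S : Subalgebra R B) :=
    { (inferInstance : Ring (S : Subalgebra R B)) with
      mul_comm := fun a b => Subtype.ext (hScomm a.1 a.2 b.1 b.2) }
  haveI hSnt : Nontrivial (S : Subalgebra R B) :=
    ⟨⟨1, S.one_mem⟩, ⟨0, S.zero_mem⟩, fun h => one_ne_zero (congrArg Subtype.val h)⟩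
  haveI hSdom : IsDomain (S : Subalgebra R B) := by
    haveI : NoZeroDivisors (S : Subalgebra R B) := by
      refine ⟨fun {a b} hab => ?_⟩
      rcases aux_nzd S hSrank hSmax hSloc a.1 (Submodule.subset_span a.2) b.1
          (Submodule.subset_span b.2) (congrArg Subtype.val hab) with h | h
      · exact Or.inl (Subtype.ext h)
      · exact Or.inr (Subtype.ext h)
    exact NoZeroDivisors.to_isDomain _
  refine ⟨?_, hSdom⟩
  -- the fraction field
  letI : Field (auxK S : Subalgebra F B) := (aux_isField S hSrank hSmax hSloc hScomm).toField
  let ι : (S : Subalgebra R B) →+* (auxK S : Subalgebra F B) :=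
    { toFun := fun s => ⟨s.1, (mem_auxK (F := F)).mpr (Submodule.subset_span s.2)⟩
      map_one' := rfl
      map_mul' := fun _ _ => rfl
      map_zero' := rfl
      map_add' := fun _ _ => rfl }
  have hι : Function.Injective ι := fun a b h => Subtype.ext (by
    have h2 := congrArg Subtype.val h
    exact h2)
  letI : Algebra (S : Subalgebra R B) (auxK S : Subalgebra F B) := ι.toAlgebra
  letI : Algebra R (auxK S : Subalgebra F B) :=
    ((algebraMap F (auxK S : Subalgebra F B)).comp (algebraMap R F)).toAlgebra
  haveI : IsScalarTower R F (auxK S : Subalgebra F B) :=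
    IsScalarTower.of_algebraMap_eq (fun r => rfl)
  haveI : IsScalarTower R (S : Subalgebra R B) (auxK S : Subalgebra F B) := by
    apply IsScalarTower.of_algebraMap_eq
    intro r
    apply Subtype.ext
    show algebraMap F B (algebraMap R F r) = algebraMap R B r
    rw [← IsScalarTower.algebraMap_apply]
  haveI hSint : Algebra.IsIntegral R (S : Subalgebra R B) := Algebra.IsIntegral.of_finite _ _
  -- val of auxK as R-algebra hom
  haveI : IsScalarTower R F B := inferInstance
  let val' : (auxK S : Subalgebra F B) →ₐ[R] B :=
    ((auxK S).val.restrictScalars R)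
  have hval : ∀ z : (auxK S : Subalgebra F B), IsIntegral R z → z.1 ∈ S := by
    intro z hz
    have : IsIntegral R (val' z) := hz.map val'
    exact hSmax z.1 ((mem_auxK (F := F)).mp z.2) this
  haveI hfr : IsFractionRing (S : Subalgebra R B) (auxK S : Subalgebra F B) := by
    constructor; constructor
    · rintro ⟨y, hy⟩
      have hy0 : y ≠ 0 := nonZeroDivisors.ne_zero hy
      have : ι y ≠ 0 := fun h => hy0 (hι (by rw [h]; rfl))
      exact isUnit_iff_ne_zero.mpr this
    · intro z
      obtain ⟨r, hr, hrz⟩ := aux_den S ((mem_auxK (F := F)).mp z.2)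
      refine ⟨⟨⟨r • z.1, hrz⟩, ⟨algebraMap R _ r, ?_⟩⟩, ?_⟩
      · apply mem_nonZeroDivisors_of_ne_zero
        intro h
        have : algebraMap R B r = 0 := congrArg Subtype.val h
        rw [IsScalarTower.algebraMap_apply R F B] at this
        exact hr (IsFractionRing.to_map_eq_zero_iff.mp
          ((map_eq_zero_iff _ (RingHom.injective (algebraMap F B))).mp this))
      · apply Subtype.ext
        show z.1 * (algebraMap R B r) = r • z.1
        rw [IsScalarTower.algebraMap_apply R F B, ← Algebra.commutes, ← Algebra.smul_def,
          algebraMap_smul]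
    · intro x y h
      exact ⟨1, by rw [hι h]⟩
  haveI : IsIntegrallyClosed (S : Subalgebra R B) := by
    rw [isIntegrallyClosed_iff (auxK S : Subalgebra F B)]
    intro x hx
    have hxR : IsIntegral R x := isIntegral_trans x hx
    exact ⟨⟨x.1, hval x hxR⟩, Subtype.ext rfl⟩
  haveI : IsIntegralClosure (S : Subalgebra R B) R (auxK S : Subalgebra F B) := by
    refine ⟨hι, fun {x} => ⟨fun hx => ⟨⟨x.1, hval x hx⟩, Subtype.ext rfl⟩, ?_⟩⟩
    rintro ⟨y, rfl⟩
    exact (hSint.isIntegral y).map (IsScalarTower.toAlgHom R _ _)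
  haveI : Ring.DimensionLEOne (S : Subalgebra R B) :=
    Ring.DimensionLEOne.of_isIntegral R (S : Subalgebra R B)
  haveI : IsNoetherianRing (S : Subalgebra R B) :=
    isNoetherian_of_tower R (inferInstance : IsNoetherian R (S : Subalgebra R B))
  haveI : IsDedekindRing (S : Subalgebra R B) := ⟨⟩
  haveI : IsDedekindDomain (S : Subalgebra R B) := ⟨⟩
  apply IsPrincipalIdealRing.of_finite_primes
  haveI := hSloc
  apply Set.Finite.subset
    ((Set.finite_singleton (IsLocalRing.maximalIdeal (S : Subalgebra R B))).insert ⊥)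
  intro p hp
  haveI : p.IsPrime := hp
  rw [Set.mem_insert_iff, Set.mem_singleton_iff]
  by_cases hp0 : p = ⊥
  · exact Or.inl hp0
  · exact Or.inr (IsLocalRing.eq_maximalIdeal (Ideal.IsPrime.isMaximal hp hp0))
end Aux5

/-- if a quaternion order `O` over a DVR contains a maximal (integrally
closed) quadratic `R`-order `S` that is a local ring, then every left (resp. right)
`O`-ideal is generated by two elements. -/
theorem stmt_8 (R F B : Type*) [CommRing R] [IsDomain R] [IsDiscreteValuationRing R]
    [Field F] [Algebra R F] [IsFractionRing R F]
    [Ring B] [Algebra F B] [Algebra R B] [IsScalarTower R F B]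
    [Algebra.IsCentral F B] [IsSimpleRing B] (hB : Module.finrank F B = 4)
    (O : Subalgebra R B) (hO : IsQuaternionOrder R F B O)
    (S : Subalgebra R B) (hSO : S ≤ O)
    (hScomm : ∀ x ∈ S, ∀ y ∈ S, x * y = y * x)
    (hSfree : Module.Free R S) (hSrank : Module.finrank R S = 2)
    (hSmax : ∀ β ∈ Submodule.span F (S : Set B), IsIntegral R β → β ∈ S)
    (hSloc : IsLocalRing S)
    (I : Submodule R B) (hIfin : Module.Finite R I)
    (hIfull : Submodule.span F (I : Set B) = ⊤) :
    ((∀ a ∈ O, ∀ x ∈ I, a * x ∈ I) →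
      ∃ x ∈ I, ∃ y ∈ I, ∀ z ∈ I, ∃ a ∈ O, ∃ b ∈ O, z = a * x + b * y) ∧
    ((∀ a ∈ O, ∀ x ∈ I, x * a ∈ I) →
      ∃ x ∈ I, ∃ y ∈ I, ∀ z ∈ I, ∃ a ∈ O, ∃ b ∈ O, z = x * a + y * b) := by
  classical
  -- B is finite dimensional over F
  obtain ⟨hOfin, hOfull⟩ := hO
  haveI : FiniteDimensional F B := by
    obtain ⟨s, hs⟩ := (Module.Finite.iff_fg (N := Subalgebra.toSubmodule O)).mp hOfin
    refine ⟨⟨s, le_antisymm le_top ?_⟩⟩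
    rw [← hOfull]
    apply Submodule.span_le.mpr
    intro z hz
    have : z ∈ Submodule.span R (s : Set B) := by rw [hs]; exact hz
    exact Submodule.span_le_restrictScalars R F (s : Set B) this
  haveI : Nontrivial B := Module.nontrivial_of_finrank_pos (R := F) (by rw [hB]; norm_num)
  haveI hSfree' : Module.Free R (S : Subalgebra R B) := hSfree
  haveI : Module.Finite R (S : Subalgebra R B) := by
    haveI : IsNoetherian R (Subalgebra.toSubmodule O) :=
      isNoetherian_of_fg_of_noetherian _ (Module.Finite.iff_fg.mp hOfin)
    have h1 : Subalgebra.toSubmodule S ≤ Subalgebra.toSubmodule O := hSO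
    have h2 := IsNoetherian.noetherian
      ((Subalgebra.toSubmodule S).comap (Subalgebra.toSubmodule O).subtype)
    have h3 := Submodule.FG.map ((Subalgebra.toSubmodule O).subtype) h2
    rw [Submodule.map_comap_eq, Submodule.range_subtype, inf_eq_right.mpr h1] at h3
    exact Module.Finite.iff_fg.mpr h3
  haveI : Module.Finite R (I : Submodule R B) := hIfin
  obtain ⟨e, heS, heLI, heSpan⟩ := aux_e (F := F) S hSrank
  obtain ⟨hPID, hDom⟩ := aux_pid S hSrank hSmax hSloc hScomm
  have hinv := aux_inv S hSrank hSmax hSloc hScomm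
  constructor
  · -- left ideal case
    intro hleft
    letI : CommRing (S : Subalgebra R B) :=
      { (inferInstance : Ring (S : Subalgebra R B)) with
        mul_comm := fun a b => Subtype.ext (hScomm a.1 a.2 b.1 b.2) }
    haveI : IsDomain (S : Subalgebra R B) := hDom
    haveI : IsPrincipalIdealRing (S : Subalgebra R B) := hPID
    letI : SMul (S : Subalgebra R B) (I : Submodule R B) :=
      ⟨fun s x => ⟨s.1 * x.1, hleft s.1 (hSO s.2) x.1 x.2⟩⟩
    have smul_def : ∀ (s : (S : Subalgebra R B)) (x : (I : Submodule R B)),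
        ((s • x : (I : Submodule R B)) : B) = s.1 * x.1 := fun _ _ => rfl
    letI : Module (S : Subalgebra R B) (I : Submodule R B) :=
      { one_smul := fun x => Subtype.ext (one_mul x.1)
        mul_smul := fun s t x => Subtype.ext (mul_assoc s.1 t.1 x.1)
        smul_zero := fun s => Subtype.ext (mul_zero s.1)
        smul_add := fun s x y => Subtype.ext (mul_add s.1 x.1 y.1)
        add_smul := fun s t x => Subtype.ext (add_mul s.1 t.1 x.1)
        zero_smul := fun x => Subtype.ext (zero_mul x.1) }
    letI : IsScalarTower R (S : Subalgebra R B) (I : Submodule R B) :=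
      ⟨fun r s x => Subtype.ext (by
        show ((r • s : (S : Subalgebra R B)) : B) * x.1 = r • (s.1 * x.1)
        rw [SetLike.val_smul, smul_mul_assoc])⟩
    haveI : Module.Finite (S : Subalgebra R B) (I : Submodule R B) :=
      Module.Finite.of_restrictScalars_finite R _ _
    haveI : NoZeroSMulDivisors (S : Subalgebra R B) (I : Submodule R B) := by
      refine ⟨fun {s x} h => ?_⟩
      by_cases hs : s = 0
      · exact Or.inl hs
      · right
        have hs1 : s.1 ≠ 0 := fun hh => hs (Subtype.ext hh)
        obtain ⟨y, _, _, hy2⟩ := hinv s.1 (Submodule.subset_span s.2) hs1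
        have hval : s.1 * x.1 = 0 := congrArg Subtype.val h
        apply Subtype.ext
        have : y * (s.1 * x.1) = x.1 := by rw [← mul_assoc, hy2, one_mul]
        rw [hval, mul_zero] at this
        exact this.symm
    haveI : Module.Free (S : Subalgebra R B) (I : Submodule R B) :=
      Module.free_of_finite_type_torsion_free'
    obtain ⟨n, hn2, ⟨bI⟩⟩ :
        ∃ n, n ≤ 2 ∧ Nonempty (Module.Basis (Fin n) (S : Subalgebra R B) (I : Submodule R B)) := by
      set ι := Module.Free.ChooseBasisIndex (S : Subalgebra R B) (I : Submodule R B) with hι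
      let b0 := Module.Free.chooseBasis (S : Subalgebra R B) (I : Submodule R B)
      refine ⟨Fintype.card ι, ?_, ⟨b0.reindex (Fintype.equivFin ι)⟩⟩
      have hfam : LinearIndependent F (fun p : ι × Fin 2 => e p.2 * ((b0 p.1 : (I : Submodule R B)) : B)) := by
        rw [Fintype.linearIndependent_iff]
        intro g hg
        set k : ι → B := fun i => ∑ j, g (i, j) • e j with hk
        have hkK : ∀ i, k i ∈ Submodule.span F (S : Set B) := fun i =>
          Submodule.sum_mem _ fun j _ => Submodule.smul_mem _ _ (Submodule.subset_span (heS j))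
        have hsum : ∑ i, k i * ((b0 i : (I : Submodule R B)) : B) = 0 := by
          have heq : ∑ i, k i * ((b0 i : (I : Submodule R B)) : B)
              = ∑ p : ι × Fin 2, g p • (e p.2 * ((b0 p.1 : (I : Submodule R B)) : B)) := by
            rw [Fintype.sum_prod_type]
            refine Finset.sum_congr rfl fun i _ => ?_
            rw [hk, Finset.sum_mul]
            exact Finset.sum_congr rfl fun j _ => smul_mul_assoc _ _ _
          rw [heq, hg]
        choose r hr hrk using fun i => aux_den S (hkK i)
        have hprod : (∏ i, r i) ≠ 0 := Finset.prod_ne_zero_iff.mpr fun i _ => hr i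
        have hmem : ∀ i, (∏ i', r i') • k i ∈ S := by
          intro i
          rw [← Finset.mul_prod_erase Finset.univ r (Finset.mem_univ i), mul_comm, mul_smul]
          exact S.smul_mem (hrk i) _
        set s : ι → (S : Subalgebra R B) := fun i => ⟨(∏ i', r i') • k i, hmem i⟩ with hs
        have hrel : ∑ i, s i • b0 i = (0 : (I : Submodule R B)) := by
          apply Subtype.ext
          rw [show ((∑ i, s i • b0 i : (I : Submodule R B)) : B) = ∑ i, ((s i • b0 i : (I : Submodule R B)) : B) from
            map_sum (I : Submodule R B).subtype _ _]
          have : ∀ i, ((s i • b0 i : (I : Submodule R B)) : B)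
              = (∏ i', r i') • (k i * ((b0 i : (I : Submodule R B)) : B)) := by
            intro i
            rw [smul_def, smul_mul_assoc]
          rw [Finset.sum_congr rfl fun i _ => this i, ← Finset.smul_sum, hsum, smul_zero]
          rfl
        have hszero := Fintype.linearIndependent_iff.mp b0.linearIndependent s hrel
        have hkzero : ∀ i, k i = 0 := by
          intro i
          have h0 : (∏ i', r i') • k i = 0 := congrArg Subtype.val (hszero i)
          have h1 : (algebraMap R F (∏ i', r i')) • k i = 0 := by
            rw [algebraMap_smul]; exact h0
          rcases smul_eq_zero.mp h1 with h | h
          · exact absurd (IsFractionRing.to_map_eq_zero_iff.mp h) hprod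
          · exact h
        intro p
        have := Fintype.linearIndependent_iff.mp heLI (fun j => g (p.1, j)) (hkzero p.1) p.2
        simpa using this
      have hcard := hfam.fintype_card_le_finrank
      rw [Fintype.card_prod, Fintype.card_fin, hB] at hcard
      omega
    -- now extract generators
    interval_cases n
    · refine ⟨0, I.zero_mem, 0, I.zero_mem, ?_⟩
      intro z hz
      refine ⟨1, O.one_mem, 1, O.one_mem, ?_⟩
      have : (⟨z, hz⟩ : (I : Submodule R B)) = ∑ i : Fin 0, bI.repr ⟨z, hz⟩ i • bI i := by
        rw [bI.sum_repr]
      have hz0 : z = 0 := by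
        have := congrArg Subtype.val this
        simpa using this
      rw [hz0]
      simp
    · refine ⟨(bI 0 : B), (bI 0).2, 0, I.zero_mem, ?_⟩
      intro z hz
      have hrep := bI.sum_repr ⟨z, hz⟩
      rw [Fin.sum_univ_one] at hrep
      refine ⟨(bI.repr ⟨z, hz⟩ 0 : B), hSO (bI.repr ⟨z, hz⟩ 0).2, 1, O.one_mem, ?_⟩
      have := congrArg Subtype.val hrep
      rw [smul_def] at this
      rw [one_mul, add_zero]
      exact this.symm
    · refine ⟨(bI 0 : B), (bI 0).2, (bI 1 : B), (bI 1).2, ?_⟩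
      intro z hz
      have hrep := bI.sum_repr ⟨z, hz⟩
      rw [Fin.sum_univ_two] at hrep
      refine ⟨(bI.repr ⟨z, hz⟩ 0 : B), hSO (bI.repr ⟨z, hz⟩ 0).2,
        (bI.repr ⟨z, hz⟩ 1 : B), hSO (bI.repr ⟨z, hz⟩ 1).2, ?_⟩
      have := congrArg Subtype.val hrep
      rw [Submodule.coe_add, smul_def, smul_def] at this
      exact this.symm
  · -- right ideal case
    intro hright
    letI : CommRing (S : Subalgebra R B) :=
      { (inferInstance : Ring (S : Subalgebra R B)) with
        mul_comm := fun a b => Subtype.ext (hScomm a.1 a.2 b.1 b.2) }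
    haveI : IsDomain (S : Subalgebra R B) := hDom
    haveI : IsPrincipalIdealRing (S : Subalgebra R B) := hPID
    letI : SMul (S : Subalgebra R B) (I : Submodule R B) :=
      ⟨fun s x => ⟨x.1 * s.1, hright s.1 (hSO s.2) x.1 x.2⟩⟩
    have smul_def : ∀ (s : (S : Subalgebra R B)) (x : (I : Submodule R B)),
        ((s • x : (I : Submodule R B)) : B) = x.1 * s.1 := fun _ _ => rfl
    letI : Module (S : Subalgebra R B) (I : Submodule R B) :=
      { one_smul := fun x => Subtype.ext (mul_one x.1)
        mul_smul := fun s t x => Subtype.ext (by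
          show x.1 * (s.1 * t.1) = (x.1 * t.1) * s.1
          rw [hScomm s.1 s.2 t.1 t.2, mul_assoc])
        smul_zero := fun s => Subtype.ext (zero_mul s.1)
        smul_add := fun s x y => Subtype.ext (add_mul x.1 y.1 s.1)
        add_smul := fun s t x => Subtype.ext (mul_add x.1 s.1 t.1)
        zero_smul := fun x => Subtype.ext (mul_zero x.1) }
    letI : IsScalarTower R (S : Subalgebra R B) (I : Submodule R B) :=
      ⟨fun r s x => Subtype.ext (by
        show x.1 * ((r • s : (S : Subalgebra R B)) : B) = r • (x.1 * s.1)
        rw [SetLike.val_smul, mul_smul_comm])⟩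
    haveI : Module.Finite (S : Subalgebra R B) (I : Submodule R B) :=
      Module.Finite.of_restrictScalars_finite R _ _
    haveI : NoZeroSMulDivisors (S : Subalgebra R B) (I : Submodule R B) := by
      refine ⟨fun {s x} h => ?_⟩
      by_cases hs : s = 0
      · exact Or.inl hs
      · right
        have hs1 : s.1 ≠ 0 := fun hh => hs (Subtype.ext hh)
        obtain ⟨y, _, hy1, _⟩ := hinv s.1 (Submodule.subset_span s.2) hs1
        have hval : x.1 * s.1 = 0 := congrArg Subtype.val h
        apply Subtype.ext
        have : (x.1 * s.1) * y = x.1 := by rw [mul_assoc, hy1, mul_one]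
        rw [hval, zero_mul] at this
        exact this.symm
    haveI : Module.Free (S : Subalgebra R B) (I : Submodule R B) :=
      Module.free_of_finite_type_torsion_free'
    obtain ⟨n, hn2, ⟨bI⟩⟩ :
        ∃ n, n ≤ 2 ∧ Nonempty (Module.Basis (Fin n) (S : Subalgebra R B) (I : Submodule R B)) := by
      set ι := Module.Free.ChooseBasisIndex (S : Subalgebra R B) (I : Submodule R B) with hι
      let b0 := Module.Free.chooseBasis (S : Subalgebra R B) (I : Submodule R B)
      refine ⟨Fintype.card ι, ?_, ⟨b0.reindex (Fintype.equivFin ι)⟩⟩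
      have hfam : LinearIndependent F (fun p : ι × Fin 2 => ((b0 p.1 : (I : Submodule R B)) : B) * e p.2) := by
        rw [Fintype.linearIndependent_iff]
        intro g hg
        set k : ι → B := fun i => ∑ j, g (i, j) • e j with hk
        have hkK : ∀ i, k i ∈ Submodule.span F (S : Set B) := fun i =>
          Submodule.sum_mem _ fun j _ => Submodule.smul_mem _ _ (Submodule.subset_span (heS j))
        have hsum : ∑ i, ((b0 i : (I : Submodule R B)) : B) * k i = 0 := by
          have heq : ∑ i, ((b0 i : (I : Submodule R B)) : B) * k i
              = ∑ p : ι × Fin 2, g p • (((b0 p.1 : (I : Submodule R B)) : B) * e p.2) := by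
            rw [Fintype.sum_prod_type]
            refine Finset.sum_congr rfl fun i _ => ?_
            rw [hk, Finset.mul_sum]
            exact Finset.sum_congr rfl fun j _ => mul_smul_comm _ _ _
          rw [heq, hg]
        choose r hr hrk using fun i => aux_den S (hkK i)
        have hprod : (∏ i, r i) ≠ 0 := Finset.prod_ne_zero_iff.mpr fun i _ => hr i
        have hmem : ∀ i, (∏ i', r i') • k i ∈ S := by
          intro i
          rw [← Finset.mul_prod_erase Finset.univ r (Finset.mem_univ i), mul_comm, mul_smul]
          exact S.smul_mem (hrk i) _
        set s : ι → (S : Subalgebra R B) := fun i => ⟨(∏ i', r i') • k i, hmem i⟩ with hs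
        have hrel : ∑ i, s i • b0 i = (0 : (I : Submodule R B)) := by
          apply Subtype.ext
          rw [show ((∑ i, s i • b0 i : (I : Submodule R B)) : B) = ∑ i, ((s i • b0 i : (I : Submodule R B)) : B) from
            map_sum (I : Submodule R B).subtype _ _]
          have : ∀ i, ((s i • b0 i : (I : Submodule R B)) : B)
              = (∏ i', r i') • (((b0 i : (I : Submodule R B)) : B) * k i) := by
            intro i
            rw [smul_def, mul_smul_comm]
          rw [Finset.sum_congr rfl fun i _ => this i, ← Finset.smul_sum, hsum, smul_zero]
          rfl
        have hszero := Fintype.linearIndependent_iff.mp b0.linearIndependent s hrel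
        have hkzero : ∀ i, k i = 0 := by
          intro i
          have h0 : (∏ i', r i') • k i = 0 := congrArg Subtype.val (hszero i)
          have h1 : (algebraMap R F (∏ i', r i')) • k i = 0 := by
            rw [algebraMap_smul]; exact h0
          rcases smul_eq_zero.mp h1 with h | h
          · exact absurd (IsFractionRing.to_map_eq_zero_iff.mp h) hprod
          · exact h
        intro p
        have := Fintype.linearIndependent_iff.mp heLI (fun j => g (p.1, j)) (hkzero p.1) p.2
        simpa using this
      have hcard := hfam.fintype_card_le_finrank
      rw [Fintype.card_prod, Fintype.card_fin, hB] at hcard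
      omega
    -- now extract generators
    interval_cases n
    · refine ⟨0, I.zero_mem, 0, I.zero_mem, ?_⟩
      intro z hz
      refine ⟨1, O.one_mem, 1, O.one_mem, ?_⟩
      have : (⟨z, hz⟩ : (I : Submodule R B)) = ∑ i : Fin 0, bI.repr ⟨z, hz⟩ i • bI i := by
        rw [bI.sum_repr]
      have hz0 : z = 0 := by
        have := congrArg Subtype.val this
        simpa using this
      rw [hz0]
      simp
    · refine ⟨(bI 0 : B), (bI 0).2, 0, I.zero_mem, ?_⟩
      intro z hz
      have hrep := bI.sum_repr ⟨z, hz⟩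
      rw [Fin.sum_univ_one] at hrep
      refine ⟨(bI.repr ⟨z, hz⟩ 0 : B), hSO (bI.repr ⟨z, hz⟩ 0).2, 1, O.one_mem, ?_⟩
      have := congrArg Subtype.val hrep
      rw [smul_def] at this
      rw [zero_mul, add_zero]
      exact this.symm
    · refine ⟨(bI 0 : B), (bI 0).2, (bI 1 : B), (bI 1).2, ?_⟩
      intro z hz
      have hrep := bI.sum_repr ⟨z, hz⟩
      rw [Fin.sum_univ_two] at hrep
      refine ⟨(bI.repr ⟨z, hz⟩ 0 : B), hSO (bI.repr ⟨z, hz⟩ 0).2,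
        (bI.repr ⟨z, hz⟩ 1 : B), hSO (bI.repr ⟨z, hz⟩ 1).2, ?_⟩
      have := congrArg Subtype.val hrep
      rw [Submodule.coe_add, smul_def, smul_def] at this
      exact this.symm
end

section
/- Let R be a DVR and O a Gorenstein quaternion R-order, corresponding under the Clifford correspondence to a ternary quadratic form Q(x,y,z) = ax² + by² + cz² + uyz + vxz + wxy with coefficients a,b,c,u,v,w ∈ R not all in the maximal ideal p. Suppose O is not basic. Then: (a) if the residue characteristic divides 2 (π ∣ 2), then π ∣ u, π ∣ v, and π ∣ w; and (b) if π ∣ u, v, w and s ∈ {a,b,c} satisfies π ∣ s, then π² ∣ s. -/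
lemma quad_mul {A B : Type*} [CommRing A] [Ring B] [Algebra A B] (α : B) (t n : A)
    (hα : α * α = t • α - n • (1:B)) (p q r s : A) :
    (p • (1:B) + q • α) * (r • (1:B) + s • α)
      = (p*r - q*s*n) • (1:B) + (p*s + q*r + q*s*t) • α := by
  rw [add_mul, mul_add, mul_add, smul_mul_smul_comm, smul_mul_smul_comm,
    smul_mul_smul_comm, smul_mul_smul_comm, one_mul, one_mul, mul_one, hα]
  module

theorem basic_of_crit (R F B : Type*) [CommRing R] [IsDomain R] [IsDiscreteValuationRing R]
    [Field F] [Algebra R F] [IsFractionRing R F]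
    [Ring B] [Algebra F B] [Algebra R B] [IsScalarTower R F B] [Nontrivial B]
    (π : R) (hπ : Irreducible π) (O : Subalgebra R B) (α : B) (hαO : α ∈ O)
    (t n : R) (hα : α * α = t • α - n • (1:B))
    (hind : LinearIndependent R ![1, α])
    (hcrit : ∀ r : R, ¬(π ∣ t - 2*r ∧ π^2 ∣ (n - r*t + r^2))) :
    ∃ S : Subalgebra R B, S ≤ O ∧ (∀ x ∈ S, ∀ y ∈ S, x * y = y * x) ∧
      Module.Free R S ∧ Module.finrank R S = 2 ∧
      ∀ β ∈ Submodule.span F (S : Set B), IsIntegral R β → β ∈ S := by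
  have hinj : Function.Injective (algebraMap R F) := IsFractionRing.injective R F
  have hindF : LinearIndependent F ![1, α] := (LinearIndependent.iff_fractionRing R F).mp hind
  have hpair : ∀ x y : F, x • (1:B) + y • α = 0 → x = 0 ∧ y = 0 := by
    intro x y h
    have := Fintype.linearIndependent_iff.mp hindF ![x, y] ?_
    · exact ⟨this 0, this 1⟩
    · simpa [Fin.sum_univ_two] using h
  set M : Submodule R B := Submodule.span R {(1:B), α} with hM
  have h1M : (1:B) ∈ M := Submodule.subset_span (by simp)
  have hαM : α ∈ M := Submodule.subset_span (by simp)
  have hmul : ∀ x ∈ M, ∀ y ∈ M, x * y ∈ M := by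
    intro x hx y hy
    obtain ⟨p, q, rfl⟩ := Submodule.mem_span_pair.mp hx
    obtain ⟨r, s, rfl⟩ := Submodule.mem_span_pair.mp hy
    rw [quad_mul α t n hα]
    exact M.add_mem (M.smul_mem _ h1M) (M.smul_mem _ hαM)
  set S : Subalgebra R B := M.toSubalgebra h1M (fun x y hx hy => hmul x hx y hy) with hS
  have hSmem : ∀ x : B, x ∈ S ↔ x ∈ M := fun _ => Iff.rfl
  refine ⟨S, ?_, ?_, ?_, ?_, ?_⟩
  · intro x hx
    have : M ≤ Subalgebra.toSubmodule O := by
      rw [Submodule.span_le]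
      rintro z hz
      simp only [Set.mem_insert_iff, Set.mem_singleton_iff] at hz
      rcases hz with rfl | rfl
      · exact O.one_mem
      · exact hαO
    exact this hx
  · intro x hx y hy
    obtain ⟨p, q, rfl⟩ := Submodule.mem_span_pair.mp ((hSmem x).mp hx)
    obtain ⟨r, s, rfl⟩ := Submodule.mem_span_pair.mp ((hSmem y).mp hy)
    rw [quad_mul α t n hα, quad_mul α t n hα]
    module
  · have hrange : Set.range ![(1:B), α] = {(1:B), α} := by
      simp [Matrix.range_cons, Matrix.range_empty, Set.pair_comm]
    have bM : Module.Basis (Fin 2) R M := (Module.Basis.span hind).map (LinearEquiv.ofEq _ _ (by rw [hrange]))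
    have e : M ≃ₗ[R] S := by
      have h1 : Subalgebra.toSubmodule S = M := Submodule.toSubalgebra_toSubmodule _ _ _
      exact (LinearEquiv.ofEq _ _ h1.symm).trans (Subalgebra.toSubmoduleEquiv S)
    exact Module.Free.of_basis (bM.map e)
  · have hrange : Set.range ![(1:B), α] = {(1:B), α} := by
      simp [Matrix.range_cons, Matrix.range_empty, Set.pair_comm]
    have bM : Module.Basis (Fin 2) R M := (Module.Basis.span hind).map (LinearEquiv.ofEq _ _ (by rw [hrange]))
    have e : M ≃ₗ[R] S := by
      have h1 : Subalgebra.toSubmodule S = M := Submodule.toSubalgebra_toSubmodule _ _ _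
      exact (LinearEquiv.ofEq _ _ h1.symm).trans (Subalgebra.toSubmoduleEquiv S)
    rw [Module.finrank_eq_card_basis (bM.map e), Fintype.card_fin]
  · intro β hβ hint
    have hspanF : Submodule.span F ((M : Submodule R B) : Set B) = Submodule.span F {(1:B), α} := by
      rw [hM]; exact Submodule.span_span_of_tower R F _
    have hβ' : β ∈ Submodule.span F {(1:B), α} := by rw [← hspanF]; exact hβ
    obtain ⟨x, y, hxy⟩ := Submodule.mem_span_pair.mp hβ'
    set t' := algebraMap R F t with ht'
    set n' := algebraMap R F n with hn'
    have hαF : α * α = t' • α - n' • (1:B) := by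
      rw [ht', hn', algebraMap_smul, algebraMap_smul]; exact hα
    rw [hSmem]
    have hnonunit : ∀ d : R, ¬IsUnit d → π ∣ d := by
      intro d hd
      have hmem : d ∈ IsLocalRing.maximalIdeal R := hd
      rw [(IsDiscreteValuationRing.irreducible_iff_uniformizer π).mp hπ] at hmem
      exact Ideal.mem_span_singleton.mp hmem
    have hvalF : ∀ z : F, z ≠ 0 → (¬∃ z₀ : R, algebraMap R F z₀ = z) →
        ∃ d : R, π ∣ d ∧ d ≠ 0 ∧ algebraMap R F d = z⁻¹ := by
      intro z hz hnz
      rcases ValuationRing.isInteger_or_isInteger R z with ⟨z₀, h⟩ | ⟨d, hd⟩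
      · exact absurd ⟨z₀, h⟩ hnz
      · refine ⟨d, ?_, ?_, hd⟩
        · apply hnonunit
          intro hu
          apply hnz
          obtain ⟨du, hdu⟩ := hu
          refine ⟨↑du⁻¹, ?_⟩
          have h1 : algebraMap R F (↑du⁻¹ : R) * z⁻¹ = 1 := by
            rw [← hd, ← hdu, ← map_mul]
            simp
          have := eq_inv_of_mul_eq_one_left h1
          rwa [inv_inv] at this
        · intro h0
          rw [h0, map_zero] at hd
          exact hz (by simpa [eq_comm, inv_eq_zero] using hd)
    by_cases hy : y = 0
    · subst hy
      rw [zero_smul, add_zero] at hxy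
      have hx1 : algebraMap F B x = β := by
        rw [Algebra.algebraMap_eq_smul_one]; exact hxy
      obtain ⟨p, pmonic, hp⟩ := hint
      have h0 : Polynomial.eval₂ (algebraMap R F) x p = 0 := by
        apply (algebraMap F B).injective
        rw [map_zero, Polynomial.hom_eval₂, ← IsScalarTower.algebraMap_eq, hx1]
        exact hp
      obtain ⟨x₀, hx₀⟩ := IsIntegrallyClosed.isIntegral_iff.mp ⟨p, pmonic, h0⟩
      rw [← hxy, ← hx₀, algebraMap_smul]
      exact M.smul_mem _ h1M
    · have hβsq : β * β = (2*x + y*t') • β - (x^2 + x*y*t' + y^2*n') • (1:B) := by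
        rw [← hxy, quad_mul α t' n' hαF]
        module
      set T := 2*x + y*t' with hT
      set N := x^2 + x*y*t' + y^2*n' with hN
      set q : Polynomial F := Polynomial.X^2 +
        (Polynomial.C (-T) * Polynomial.X + Polynomial.C N) with hq
      have htail : (Polynomial.C (-T) * Polynomial.X + Polynomial.C N).degree <
          (Polynomial.X ^ 2 : Polynomial F).degree := by
        apply lt_of_le_of_lt Polynomial.degree_linear_le
        rw [Polynomial.degree_X_pow]
        norm_num
      have qmonic : q.Monic := (Polynomial.monic_X_pow 2).add_of_left htail
      have hdegq : q.degree = 2 := by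
        rw [hq, Polynomial.degree_add_eq_left_of_degree_lt htail, Polynomial.degree_X_pow]
        rfl
      have haq : Polynomial.aeval β q = 0 := by
        simp only [hq, map_add, map_mul, map_pow, Polynomial.aeval_X, Polynomial.aeval_C,
          ← Algebra.smul_def]
        simp only [Algebra.algebraMap_eq_smul_one]
        rw [pow_two, hβsq]
        module
      have hβpair : ∀ c d : F, c • (1:B) + d • β = 0 → c = 0 ∧ d = 0 := by
        intro c d h
        have h' : (c + d*x) • (1:B) + (d*y) • α = 0 := by
          rw [← h, ← hxy]; module
        obtain ⟨h1, h2⟩ := hpair _ _ h'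
        have hd : d = 0 := by
          rcases mul_eq_zero.mp h2 with h | h
          · exact h
          · exact absurd h hy
        refine ⟨?_, hd⟩
        rw [hd, zero_mul, add_zero] at h1
        exact h1
      obtain ⟨p, pmonic, hp⟩ := hint
      set pF := p.map (algebraMap R F) with hpF
      have pFmonic : pF.Monic := pmonic.map _
      have haevalpF : Polynomial.aeval β pF = 0 := by
        rw [hpF, Polynomial.aeval_map_algebraMap]
        rw [Polynomial.aeval_def]
        exact hp
      have hrem : pF %ₘ q = 0 := by
        have hdeg : (pF %ₘ q).degree < 2 := by
          rw [← hdegq]; exact Polynomial.degree_modByMonic_lt pF qmonic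
        have haev : Polynomial.aeval β (pF %ₘ q) = 0 := by
          have hsum := Polynomial.modByMonic_add_div pF q
          have h2 : Polynomial.aeval β (pF %ₘ q + q * (pF /ₘ q)) = Polynomial.aeval β pF := by
            rw [hsum]
          rw [map_add, map_mul, haq, zero_mul, add_zero, haevalpF] at h2
          exact h2
        have hle : (pF %ₘ q).degree ≤ 1 := by
          have hgen : ∀ d : WithBot ℕ, d < 2 → d ≤ 1 := by
            intro d hd
            induction d using WithBot.recBotCoe with
            | bot => exact bot_le
            | coe m =>
                have h2 : ((2:ℕ) : WithBot ℕ) = 2 := rfl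
                have h1 : ((1:ℕ) : WithBot ℕ) = 1 := rfl
                rw [← h2] at hd
                rw [← h1]
                exact WithBot.coe_le_coe.mpr (Nat.lt_succ_iff.mp (WithBot.coe_lt_coe.mp hd))
          exact hgen _ hdeg
        have heq := Polynomial.eq_X_add_C_of_degree_le_one hle
        have haev' : ((pF %ₘ q).coeff 0) • (1:B) + ((pF %ₘ q).coeff 1) • β = 0 := by
          rw [heq] at haev
          simp only [map_add, map_mul, Polynomial.aeval_X, Polynomial.aeval_C,
            ← Algebra.smul_def] at haev
          simp only [Algebra.algebraMap_eq_smul_one] at haev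
          rw [add_comm] at haev
          exact haev
        obtain ⟨h0, h1⟩ := hβpair _ _ haev'
        rw [heq, h0, h1]
        simp
      have hdvd : q ∣ pF := by
        refine ⟨pF /ₘ q, ?_⟩
        conv_lhs => rw [← Polynomial.modByMonic_add_div pF q]
        rw [hrem, zero_add]
      obtain ⟨g, hg⟩ := IsIntegrallyClosed.eq_map_mul_C_of_dvd F pmonic hdvd
      rw [qmonic.leadingCoeff, map_one, mul_one] at hg
      have hcoe0 : algebraMap R F (g.coeff 0) = N := by
        have := congrArg (fun f => Polynomial.coeff f 0) hg
        simpa [hq, Polynomial.coeff_map] using this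
      have hcoe1 : algebraMap R F (g.coeff 1) = -T := by
        have := congrArg (fun f => Polynomial.coeff f 1) hg
        simpa [hq, Polynomial.coeff_map] using this
      set N₀ := g.coeff 0 with hN₀
      set T₀ := -(g.coeff 1) with hT₀def
      have hT₀ : algebraMap R F T₀ = T := by rw [hT₀def, map_neg, hcoe1, neg_neg]
      have hyR : ∃ y₀ : R, algebraMap R F y₀ = y := by
        by_contra hy'
        obtain ⟨d, hπd, hd0, hd⟩ := hvalF y hy hy'
        have hxyR : ∃ r₀ : R, algebraMap R F r₀ = x / y := by
          by_contra hxy'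
          have hx0 : x ≠ 0 := by
            rintro rfl
            exact hxy' ⟨0, by simp⟩
          have hxy0 : x / y ≠ 0 := div_ne_zero hx0 hy
          obtain ⟨e, hπe, he0, he⟩ := hvalF (x/y) hxy0 hxy'
          have heyx : algebraMap R F e = y / x := by rw [he, inv_div]
          have hid : y^2 * (1 + t' * (y/x) + n' * (y/x)^2) = N * (y/x)^2 := by
            rw [hN]; field_simp
          rw [← heyx] at hid
          have hu : IsUnit (1 + t*e + n*e^2) := by
            by_contra hnu
            have hdv : π ∣ 1 + t*e + n*e^2 := hnonunit _ hnu
            have h2 : π ∣ t*e + n*e^2 := by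
              refine dvd_add (hπe.mul_left t) ?_
              have : n*e^2 = (n*e)*e := by ring
              rw [this]
              exact hπe.mul_left (n*e)
            have h1 : π ∣ (1:R) := by
              have he1 : (1:R) = (1 + t*e + n*e^2) - (t*e + n*e^2) := by ring
              rw [he1]
              exact dvd_sub hdv h2
            exact hπ.not_isUnit (isUnit_of_dvd_one h1)
          obtain ⟨w, hw⟩ := hu
          have hwF : algebraMap R F (↑w : R) =
              1 + t' * algebraMap R F e + n' * (algebraMap R F e)^2 := by
            rw [hw, map_add, map_add, map_one, map_mul, map_mul, map_pow]
          have hwne : algebraMap R F (↑w : R) ≠ 0 := by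
            intro hc
            exact w.ne_zero (hinj (by rw [hc, map_zero]))
          have hy2 : y^2 = algebraMap R F (N₀ * e^2 * ↑w⁻¹) := by
            apply mul_right_cancel₀ hwne
            have hR : algebraMap R F (N₀ * e^2 * ↑w⁻¹) * algebraMap R F (↑w : R) =
                algebraMap R F (N₀ * e^2) := by
              rw [← map_mul, Units.inv_mul_cancel_right]
            rw [hR, hwF, hid, map_mul, map_pow, hcoe0]
          have hyInt : IsIntegral R y := by
            refine ⟨Polynomial.X^2 - Polynomial.C (N₀ * e^2 * ↑w⁻¹),
              Polynomial.monic_X_pow_sub_C _ two_ne_zero, ?_⟩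
            simp only [Polynomial.eval₂_sub, Polynomial.eval₂_pow, Polynomial.eval₂_X,
              Polynomial.eval₂_C]
            rw [← hy2, sub_self]
          exact hy' (IsIntegrallyClosed.isIntegral_iff.mp hyInt)
        obtain ⟨r₀, hr₀⟩ := hxyR
        refine hcrit (-r₀) ⟨?_, ?_⟩
        · have heq : t - 2*(-r₀) = T₀ * d := by
            apply hinj
            rw [map_sub, map_mul, map_mul, map_neg, hr₀, hT₀, hd, map_ofNat]
            rw [hT]
            field_simp
            ring
          rw [heq]
          exact hπd.mul_left T₀
        · have heq : n - (-r₀)*t + (-r₀)^2 = N₀ * d^2 := by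
            apply hinj
            rw [map_add, map_sub, map_mul, map_mul, map_pow, map_pow, map_neg, hr₀, hcoe0, hd]
            rw [hN]
            field_simp
            ring
          rw [heq]
          exact Dvd.dvd.mul_left (pow_dvd_pow_of_dvd hπd 2) N₀
      obtain ⟨y₀, hy₀⟩ := hyR
      have hxInt : IsIntegral R x := by
        refine ⟨Polynomial.X^2 + (Polynomial.C (y₀*t) * Polynomial.X +
          Polynomial.C (-(N₀ - y₀^2*n))), ?_, ?_⟩
        · refine (Polynomial.monic_X_pow 2).add_of_left ?_
          apply lt_of_le_of_lt Polynomial.degree_linear_le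
          rw [Polynomial.degree_X_pow]
          norm_num
        · simp only [Polynomial.eval₂_add, Polynomial.eval₂_mul, Polynomial.eval₂_pow,
            Polynomial.eval₂_X, Polynomial.eval₂_C]
          rw [map_neg, map_sub, map_mul, map_mul, map_pow, hy₀, hcoe0, hN, ht', hn']
          ring
      obtain ⟨x₀, hx₀⟩ := IsIntegrallyClosed.isIntegral_iff.mp hxInt
      rw [← hxy, ← hx₀, ← hy₀, algebraMap_smul, algebraMap_smul]
      exact M.add_mem (M.smul_mem _ h1M) (M.smul_mem _ hαM)

/-- let `O` be a Gorenstein quaternion order over a DVR, with good basis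
`1, i, j, k` and associated primitive ternary quadratic form with coefficients
`a, b, c, u, v, w`.  If `O` is not basic then: (a) if `π ∣ 2` then `π ∣ u, v, w`; and
(b) if `π ∣ u, v, w` and `s ∈ {a, b, c}` with `π ∣ s`, then `π² ∣ s`. -/
theorem stmt_11 (R F B : Type*) [CommRing R] [IsDomain R] [IsDiscreteValuationRing R]
    [Field F] [Algebra R F] [IsFractionRing R F]
    [Ring B] [Algebra F B] [Algebra R B] [IsScalarTower R F B]
    [Algebra.IsCentral F B] [IsSimpleRing B] (hBdim : Module.finrank F B = 4)
    (π : R) (hπ : Irreducible π)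
    (O : Subalgebra R B) (hO : IsQuaternionOrder R F B O)
    (a b c u v w : R) (i j k : B)
    (hspan : Subalgebra.toSubmodule O = Submodule.span R {1, i, j, k})
    (hindep : LinearIndependent R ![1, i, j, k])
    (hii : i * i = algebraMap R B u * i - algebraMap R B (b * c))
    (hjj : j * j = algebraMap R B v * j - algebraMap R B (a * c))
    (hkk : k * k = algebraMap R B w * k - algebraMap R B (a * b))
    (hjk : j * k = algebraMap R B a * (algebraMap R B u - i))
    (hki : k * i = algebraMap R B b * (algebraMap R B v - j))
    (hij : i * j = algebraMap R B c * (algebraMap R B w - k))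
    (hprim : ¬ (π ∣ a ∧ π ∣ b ∧ π ∣ c ∧ π ∣ u ∧ π ∣ v ∧ π ∣ w))
    (hnotbasic : ¬ IsBasicOrder R F B O) :
    ((π ∣ (2 : R)) → π ∣ u ∧ π ∣ v ∧ π ∣ w) ∧
    ((π ∣ u ∧ π ∣ v ∧ π ∣ w) → ∀ s ∈ ({a, b, c} : Set R), π ∣ s → π ^ 2 ∣ s) := by
  have h10 : (1:B) ≠ 0 := by simpa using hindep.ne_zero 0
  have hnontriv : Nontrivial B := nontrivial_of_ne 1 0 h10
  have hmemO : ∀ x : B, x ∈ ({1, i, j, k} : Set B) → x ∈ O := by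
    intro x hx
    have hx' : x ∈ Submodule.span R {(1:B), i, j, k} := Submodule.subset_span hx
    rw [← hspan] at hx'
    exact hx'
  have hkey : ∀ α : B, α ∈ O → ∀ t n : R,
      α * α = t • α - n • (1:B) → LinearIndependent R ![1, α] →
      ∃ r, π ∣ t - 2*r ∧ π^2 ∣ n - r*t + r^2 := by
    intro α hαO t n hrel hind2
    by_contra hno
    exact hnotbasic (basic_of_crit R F B π hπ O α hαO t n hrel hind2
      (fun r hr => hno ⟨r, hr⟩))
  have hind_i : LinearIndependent R ![1, i] := by
    have hcomp := hindep.comp ![0, 1] (by decide)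
    have he : ![(1:B), i, j, k] ∘ ![0, 1] = ![1, i] := by
      funext m; fin_cases m <;> rfl
    rwa [he] at hcomp
  have hind_j : LinearIndependent R ![1, j] := by
    have hcomp := hindep.comp ![0, 2] (by decide)
    have he : ![(1:B), i, j, k] ∘ ![0, 2] = ![1, j] := by
      funext m; fin_cases m <;> rfl
    rwa [he] at hcomp
  have hind_k : LinearIndependent R ![1, k] := by
    have hcomp := hindep.comp ![0, 3] (by decide)
    have he : ![(1:B), i, j, k] ∘ ![0, 3] = ![1, k] := by
      funext m; fin_cases m <;> rfl
    rwa [he] at hcomp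
  have hi' : i * i = u • i - (b*c) • (1:B) := by
    rw [hii, Algebra.smul_def, Algebra.smul_def, mul_one]
  have hj' : j * j = v • j - (a*c) • (1:B) := by
    rw [hjj, Algebra.smul_def, Algebra.smul_def, mul_one]
  have hk' : k * k = w • k - (a*b) • (1:B) := by
    rw [hkk, Algebra.smul_def, Algebra.smul_def, mul_one]
  have hci := hkey i (hmemO i (by simp)) u (b*c) hi' hind_i
  have hcj := hkey j (hmemO j (by simp)) v (a*c) hj' hind_j
  have hck := hkey k (hmemO k (by simp)) w (a*b) hk' hind_k
  have hprime : Prime π := hπ.prime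
  constructor
  · intro h2
    have part : ∀ t n : R, (∃ r, π ∣ t - 2*r ∧ π^2 ∣ n - r*t + r^2) → π ∣ t := by
      rintro t n ⟨r, hr, -⟩
      have he : t = (t - 2*r) + 2*r := by ring
      rw [he]
      exact dvd_add hr (h2.mul_right r)
    exact ⟨part u (b*c) hci, part v (a*c) hcj, part w (a*b) hck⟩
  · rintro ⟨hu, hv, hw⟩ s hs hπs
    have step : ∀ s' c' t' r : R, π ∣ s' → ¬ π ∣ c' → π ∣ t' →
        π^2 ∣ s'*c' - r*t' + r^2 → π^2 ∣ s' := by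
      intro s' c' t' r hs' hc' ht' h2
      have hππ : π ∣ π^2 := dvd_pow_self π two_ne_zero
      have hr : π ∣ r := by
        have h1 : π ∣ s'*c' - r*t' + r^2 := hππ.trans h2
        have hr2 : π ∣ r^2 := by
          have he : r^2 = (s'*c' - r*t' + r^2) - s'*c' + r*t' := by ring
          rw [he]
          exact dvd_add (dvd_sub h1 (hs'.mul_right c')) (ht'.mul_left r)
        exact hprime.dvd_of_dvd_pow hr2
      have hsc : π^2 ∣ s'*c' := by
        have he : s'*c' = (s'*c' - r*t' + r^2) + r*t' - r^2 := by ring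
        rw [he]
        have hrt : π^2 ∣ r*t' := by rw [pow_two]; exact mul_dvd_mul hr ht'
        exact dvd_sub (dvd_add h2 hrt) (pow_dvd_pow_of_dvd hr 2)
      obtain ⟨s1, rfl⟩ := hs'
      have h3 : π * π ∣ π * (s1 * c') := by
        rw [← mul_assoc, ← pow_two]
        exact hsc
      have h4 : π ∣ s1 * c' := (mul_dvd_mul_iff_left hprime.ne_zero).mp h3
      have h5 : π ∣ s1 := (hprime.dvd_mul.mp h4).resolve_right hc'
      rw [pow_two]
      exact mul_dvd_mul_left π h5
    simp only [Set.mem_insert_iff, Set.mem_singleton_iff] at hs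
    rcases hs with rfl | rfl | rfl
    · have hbc : ¬ π ∣ b ∨ ¬ π ∣ c := by
        by_contra h
        push_neg at h
        exact hprim ⟨hπs, h.1, h.2, hu, hv, hw⟩
      rcases hbc with hb | hc
      · obtain ⟨r, -, h2⟩ := hck
        exact step s b w r hπs hb hw h2
      · obtain ⟨r, -, h2⟩ := hcj
        exact step s c v r hπs hc hv h2
    · have hac : ¬ π ∣ a ∨ ¬ π ∣ c := by
        by_contra h
        push_neg at h
        exact hprim ⟨h.1, hπs, h.2, hu, hv, hw⟩
      rcases hac with ha | hc
      · obtain ⟨r, -, h2⟩ := hck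
        have h2' : π^2 ∣ s*a - r*w + r^2 := by rwa [mul_comm a s] at h2
        exact step s a w r hπs ha hw h2'
      · obtain ⟨r, -, h2⟩ := hci
        exact step s c u r hπs hc hu h2
    · have hab : ¬ π ∣ a ∨ ¬ π ∣ b := by
        by_contra h
        push_neg at h
        exact hprim ⟨h.1, h.2, hπs, hu, hv, hw⟩
      rcases hab with ha | hb
      · obtain ⟨r, -, h2⟩ := hcj
        have h2' : π^2 ∣ s*a - r*v + r^2 := by rwa [mul_comm a s] at h2
        exact step s a v r hπs ha hv h2'
      · obtain ⟨r, -, h2⟩ := hci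
        have h2' : π^2 ∣ s*b - r*u + r^2 := by rwa [mul_comm b s] at h2
        exact step s b u r hπs hb hu h2'
end
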